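/- arXiv:1502.06903 — 6 statements merged into one kernel-verified Lean document; each statement's English description precedes it below -/
import Mathlib

section
/- For every real q > 0 that is not an integer, every integer m, and every real x with (2m−1)π < x < (2m+1)π, the series Σ_{N=1}^{∞} (−1)^N e^{−iNx}/(N − q) converges and equals −π·e^{iq(2mπ − x)}/sin(qπ) + Σ_{N=0}^{∞} (−1)^N e^{iNx}/(N + q), where the second series also converges. -/
open Filter Complex MeasureTheory Real Set Topology

noncomputable section
namespace Stmt2

lemma rl_aux (φ : ℝ → ℂ) (hφ : Integrable φ) (c : ℝ)
    (hc : Tendsto (fun M : ℕ => -((c * M) / (2 * π))) atTop (cocompact ℝ)) :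
    Tendsto (fun M : ℕ => ∫ s : ℝ, φ s * Complex.exp (Complex.I * (c * M * s))) atTop (𝓝 0) := by
  have H := Real.tendsto_integral_exp_smul_cocompact φ
  have H2 := H.comp hc
  convert H2 using 2 with M
  refine integral_congr_ae (Eventually.of_forall fun s => ?_)
  simp only [Function.comp_apply, Circle.smul_def, Real.fourierChar_apply]
  rw [mul_comm]
  congr 1
  have h : 2 * π * -(s * -(c * (M:ℝ) / (2 * π))) = c * M * s := by
    field_simp
  rw [h]
  push_cast
  ring

lemma tendsto_div2pi : Tendsto (fun M : ℕ => (M : ℝ) / (2 * π)) atTop atTop :=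
  (tendsto_natCast_atTop_atTop).atTop_div_const (by positivity)

lemma rl_pos (φ : ℝ → ℂ) (hφ : Integrable φ) :
    Tendsto (fun M : ℕ => ∫ s : ℝ, φ s * Complex.exp (Complex.I * M * s)) atTop (𝓝 0) := by
  have h2 : Tendsto (fun M : ℕ => -((1 : ℝ) * (M : ℝ) / (2 * π))) atTop atBot := by
    refine (tendsto_neg_atTop_atBot.comp tendsto_div2pi).congr fun M => ?_
    simp only [Function.comp_apply]
    ring
  have h3 : atBot ≤ cocompact ℝ := by rw [cocompact_eq_atBot_atTop]; exact le_sup_left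
  have H := rl_aux φ hφ 1 (h2.mono_right h3)
  refine H.congr fun M => ?_
  refine integral_congr_ae (Eventually.of_forall fun s => ?_)
  congr 1
  push_cast
  ring

lemma rl_neg (φ : ℝ → ℂ) (hφ : Integrable φ) :
    Tendsto (fun M : ℕ => ∫ s : ℝ, φ s * Complex.exp (-(Complex.I * M * s))) atTop (𝓝 0) := by
  have h2 : Tendsto (fun M : ℕ => -((-1 : ℝ) * (M : ℝ) / (2 * π))) atTop atTop := by
    refine tendsto_div2pi.congr fun M => ?_
    ring
  have h3 : atTop ≤ cocompact ℝ := by rw [cocompact_eq_atBot_atTop]; exact le_sup_right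
  have H := rl_aux φ hφ (-1) (h2.mono_right h3)
  refine H.congr fun M => ?_
  refine integral_congr_ae (Eventually.of_forall fun s => ?_)
  congr 1
  push_cast
  ring

lemma zpow_sum_Icc (w : ℂ) (hw0 : w ≠ 0) (hw1 : w ≠ 1) (M : ℕ) :
    ∑ n ∈ Finset.Icc (-(M : ℤ)) ((M : ℤ) - 1), w ^ n
      = (w ^ (M : ℤ) - w ^ (-(M : ℤ))) / (w - 1) := by
  have hw1' : w - 1 ≠ 0 := sub_ne_zero.mpr hw1
  induction M with
  | zero => simp
  | succ M ih =>
    have hins : Finset.Icc (-((M : ℤ) + 1)) (((M : ℤ) + 1) - 1)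
        = insert (-((M : ℤ) + 1)) (insert (M : ℤ) (Finset.Icc (-(M : ℤ)) ((M : ℤ) - 1))) := by
      ext n
      simp only [Finset.mem_Icc, Finset.mem_insert]
      omega
    have h1 : (-((M : ℤ) + 1)) ∉ insert (M : ℤ) (Finset.Icc (-(M : ℤ)) ((M : ℤ) - 1)) := by
      simp only [Finset.mem_Icc, Finset.mem_insert]
      omega
    have h2 : (M : ℤ) ∉ Finset.Icc (-(M : ℤ)) ((M : ℤ) - 1) := by
      simp only [Finset.mem_Icc]
      omega
    push_cast
    rw [hins, Finset.sum_insert h1, Finset.sum_insert h2, ih]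
    have ha0 : w ^ (M : ℤ) ≠ 0 := zpow_ne_zero _ hw0
    rw [zpow_add_one₀ hw0, zpow_neg, zpow_neg, zpow_add_one₀ hw0]
    field_simp
    ring

lemma exp_I_int_pi (n : ℤ) : Complex.exp (Complex.I * n * Real.pi) = (-1 : ℂ) ^ n := by
  rw [show Complex.I * n * Real.pi = n * (Real.pi * Complex.I) by ring, Complex.exp_int_mul,
    Complex.exp_pi_mul_I]

lemma neg_one_zpow_neg (n : ℤ) : (-1 : ℂ) ^ (-n) = (-1 : ℂ) ^ n := by
  rw [zpow_neg, ← inv_zpow, inv_neg_one]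

lemma integral_exp_int (t : ℝ) (n : ℤ) (hn : n ≠ 0) :
    ∫ s in (-Real.pi)..Real.pi, Complex.exp (Complex.I * n * (s + t)) = 0 := by
  have hc : Complex.I * n ≠ 0 :=
    mul_ne_zero Complex.I_ne_zero (by exact_mod_cast (Int.cast_ne_zero (α := ℂ)).mpr hn)
  have : ∀ s : ℝ, Complex.exp (Complex.I * n * (s + t))
      = Complex.exp (Complex.I * n * t) * Complex.exp ((Complex.I * n) * s) := by
    intro s
    rw [← Complex.exp_add]
    congr 1
    ring
  rw [intervalIntegral.integral_congr fun s _ => this s,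
    intervalIntegral.integral_const_mul, integral_exp_mul_complex hc]
  have e1 : Complex.I * n * (Real.pi : ℂ) = Complex.I * n * Real.pi := rfl
  have e2 : Complex.exp (Complex.I * n * ((-Real.pi : ℝ) : ℂ))
      = Complex.exp (Complex.I * (-n) * Real.pi) := by
    congr 1
    push_cast
    ring
  have e3 : Complex.exp (Complex.I * (-(n : ℂ)) * Real.pi) = (-1 : ℂ) ^ n := by
    have := exp_I_int_pi (-n)
    rw [neg_one_zpow_neg] at this
    rw [← this]
    push_cast
    ring_nf
  rw [e2, exp_I_int_pi] 
  rw [show Complex.I * -(n:ℂ) * Real.pi = Complex.I * (-(n:ℂ)) * Real.pi from rfl, e3]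
  simp

lemma int_rep (q t : ℝ) (hqn : ∀ n : ℤ, (q : ℝ) + n ≠ 0) (n : ℤ) :
    ∫ s in (-Real.pi)..Real.pi,
        Complex.exp (Complex.I * (q * s)) * Complex.exp (Complex.I * n * (s + t))
      = 2 * (Real.sin (q * Real.pi) : ℂ)
          * ((-1 : ℂ) ^ n * Complex.exp (Complex.I * n * t) / ((n : ℂ) + q)) := by
  have hqn' : ((q : ℂ) + n) ≠ 0 := by
    intro h
    exact hqn n (by exact_mod_cast h)
  have hc : Complex.I * ((q : ℂ) + n) ≠ 0 := mul_ne_zero Complex.I_ne_zero hqn'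
  have key : ∀ s : ℝ, Complex.exp (Complex.I * (q * s)) * Complex.exp (Complex.I * n * (s + t))
      = Complex.exp (Complex.I * n * t) * Complex.exp ((Complex.I * ((q : ℂ) + n)) * s) := by
    intro s
    rw [← Complex.exp_add, ← Complex.exp_add]
    congr 1
    ring
  rw [intervalIntegral.integral_congr fun s _ => key s,
    intervalIntegral.integral_const_mul, integral_exp_mul_complex hc]
  set y : ℝ := (q + n) * Real.pi with hy
  have e1 : Complex.I * ((q : ℂ) + n) * (Real.pi : ℂ) = (y : ℂ) * Complex.I := by
    rw [hy]; push_cast; ring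
  have e2 : Complex.I * ((q : ℂ) + n) * ((-Real.pi : ℝ) : ℂ) = ((-y : ℝ) : ℂ) * Complex.I := by
    rw [hy]; push_cast; ring
  rw [e1, e2, Complex.exp_mul_I, Complex.exp_mul_I]
  rw [← Complex.ofReal_sin, ← Complex.ofReal_cos, ← Complex.ofReal_sin, ← Complex.ofReal_cos]
  rw [Real.cos_neg, Real.sin_neg]
  have hsy : Real.sin y = (-1 : ℝ) ^ n * Real.sin (q * Real.pi) := by
    rw [hy, show (q + n) * Real.pi = q * Real.pi + n * Real.pi by ring,
      Real.sin_add_int_mul_pi]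
  rw [hsy]
  have hqn2 : ((n : ℂ) + q) ≠ 0 := by rw [add_comm]; exact hqn'
  push_cast
  field_simp
  ring

def ker (t : ℝ) (M : ℕ) (s : ℝ) : ℂ :=
  ∑ n ∈ Finset.Icc (-(M : ℤ)) ((M : ℤ) - 1), Complex.exp (Complex.I * n * (s + t))

lemma continuous_ker (t : ℝ) (M : ℕ) : Continuous (ker t M) := by
  unfold ker
  apply continuous_finset_sum
  intro n _
  fun_prop

lemma integral_ker (t : ℝ) (M : ℕ) (hM : 1 ≤ M) :
    ∫ s in (-Real.pi)..Real.pi, ker t M s = 2 * (Real.pi : ℂ) := by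
  unfold ker
  rw [intervalIntegral.integral_finset_sum]
  · have key : ∀ n ∈ Finset.Icc (-(M : ℤ)) ((M : ℤ) - 1),
        (∫ s in (-Real.pi)..Real.pi, Complex.exp (Complex.I * n * (s + t)))
          = if n = 0 then (2 * (Real.pi : ℂ)) else 0 := by
      intro n _
      by_cases hn : n = 0
      · subst hn
        rw [if_pos rfl]
        simp only [Int.cast_zero, mul_zero, zero_mul, Complex.exp_zero]
        rw [intervalIntegral.integral_const, Complex.real_smul]
        push_cast
        ring
      · rw [if_neg hn]
        exact integral_exp_int t n hn
    rw [Finset.sum_congr rfl key, Finset.sum_ite_eq']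
    rw [if_pos]
    simp only [Finset.mem_Icc]
    omega
  · intro n _
    apply Continuous.intervalIntegrable
    fun_prop

lemma sum_rep (q t : ℝ) (hqn : ∀ n : ℤ, (q : ℝ) + n ≠ 0) (M : ℕ) :
    (2 * (Real.sin (q * Real.pi) : ℂ)) * ∑ n ∈ Finset.Icc (-(M : ℤ)) ((M : ℤ) - 1),
        (-1 : ℂ) ^ n * Complex.exp (Complex.I * n * t) / ((n : ℂ) + q)
      = ∫ s in (-Real.pi)..Real.pi, Complex.exp (Complex.I * (q * s)) * ker t M s := by
  have step1 : ∀ s ∈ Set.uIcc (-Real.pi) Real.pi,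
      Complex.exp (Complex.I * (q * s)) * ker t M s
        = ∑ n ∈ Finset.Icc (-(M : ℤ)) ((M : ℤ) - 1),
            Complex.exp (Complex.I * (q * s)) * Complex.exp (Complex.I * n * (s + t)) := by
    intro s _
    rw [ker, Finset.mul_sum]
  rw [intervalIntegral.integral_congr step1, intervalIntegral.integral_finset_sum]
  · rw [Finset.mul_sum]
    refine Finset.sum_congr rfl fun n _ => ?_
    rw [int_rep q t hqn n]
  · intro n _
    apply Continuous.intervalIntegrable
    fun_prop

def phi (q t : ℝ) (s : ℝ) : ℂ :=
  (Complex.exp (Complex.I * (q * s)) - Complex.exp (-(Complex.I * (q * t)))) /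
    (Complex.exp (Complex.I * (s + t)) - 1)

lemma denom_ne_one {t : ℝ} (ht1 : -Real.pi < t) (ht2 : t < Real.pi) {s : ℝ}
    (hs1 : -Real.pi ≤ s) (hs2 : s ≤ Real.pi) (hsne : s ≠ -t) :
    Complex.exp (Complex.I * (s + t)) ≠ 1 := by
  rw [Ne, Complex.exp_eq_one_iff]
  rintro ⟨n, hn⟩
  have h2 : ((s + t : ℝ) : ℂ) * Complex.I = ((2 * Real.pi * n : ℝ) : ℂ) * Complex.I := by
    push_cast
    rw [show ((s : ℂ) + t) * Complex.I = Complex.I * ((s : ℂ) + t) by ring, hn]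
    ring
  have h3 : (s + t : ℝ) = 2 * Real.pi * n := by
    have := mul_right_cancel₀ Complex.I_ne_zero h2
    exact_mod_cast this
  have hpi := Real.pi_pos
  rcases lt_trichotomy n 0 with hn0 | hn0 | hn0
  · have hn1 : n ≤ -1 := by omega
    have : (n : ℝ) ≤ -1 := by exact_mod_cast hn1
    nlinarith
  · subst hn0
    simp at h3
    exact hsne (by linarith)
  · have : (1 : ℝ) ≤ n := by exact_mod_cast hn0
    nlinarith

lemma norm_exp_I_mul (y : ℝ) : ‖Complex.exp (Complex.I * y)‖ = 1 := by
  rw [show Complex.I * (y : ℂ) = (y : ℝ) * Complex.I by ring]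
  exact Complex.norm_exp_ofReal_mul_I y

lemma num_factor (q t s : ℝ) :
    Complex.exp (Complex.I * (q * s)) - Complex.exp (-(Complex.I * (q * t)))
      = Complex.exp (-(Complex.I * (q * t))) * (Complex.exp (Complex.I * (q * (s + t))) - 1) := by
  rw [mul_sub, ← Complex.exp_add, mul_one]
  congr 2
  push_cast
  ring

lemma denom_lower {θ : ℝ} (hθ : |θ| ≤ Real.pi / 2) :
    2 / Real.pi * |θ| ≤ ‖Complex.exp (Complex.I * θ) - 1‖ := by
  have him : (Complex.exp (Complex.I * θ) - 1).im = Real.sin θ := by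
    rw [show Complex.I * (θ : ℂ) = (θ : ℝ) * Complex.I by ring]
    simp [Complex.exp_ofReal_mul_I_im]
  have h1 : |Real.sin θ| ≤ ‖Complex.exp (Complex.I * θ) - 1‖ := by
    calc |Real.sin θ| = |(Complex.exp (Complex.I * θ) - 1).im| := by rw [him]
      _ ≤ ‖Complex.exp (Complex.I * θ) - 1‖ := Complex.abs_im_le_norm _
  exact (Real.mul_abs_le_abs_sin hθ).trans h1

lemma phi_bound (q t : ℝ) (hq : 0 < q) (ht1 : -Real.pi < t) (ht2 : t < Real.pi) :
    ∃ C : ℝ, ∀ s ∈ Set.Icc (-Real.pi) Real.pi, s ≠ -t → ‖phi q t s‖ ≤ C := by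
  have hpi := Real.pi_pos
  set δ : ℝ := min (Real.pi / 2) (1 / q) with hδ
  have hδ0 : 0 < δ := lt_min (by positivity) (by positivity)
  -- the "small |s+t|" bound
  have small : ∀ s ∈ Set.Icc (-Real.pi) Real.pi, s ≠ -t → |s + t| ≤ δ →
      ‖phi q t s‖ ≤ q * Real.pi := by
    rintro s ⟨hs1, hs2⟩ hsne hsm
    have hst0 : s + t ≠ 0 := fun h => hsne (by linarith)
    have hnum : ‖Complex.exp (Complex.I * (q * s)) - Complex.exp (-(Complex.I * (q * t)))‖
        ≤ 2 * (q * |s + t|) := by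
      rw [num_factor, norm_mul]
      have h1 : ‖Complex.exp (-(Complex.I * (q * t)))‖ = 1 := by
        rw [show -(Complex.I * ((q : ℂ) * t)) = Complex.I * ((-(q*t) : ℝ) : ℂ) by push_cast; ring]
        exact norm_exp_I_mul _
      rw [h1, one_mul]
      have h2 : ‖Complex.I * ((q * (s + t) : ℝ) : ℂ)‖ = q * |s + t| := by
        rw [norm_mul, Complex.norm_I, Complex.norm_real, Real.norm_eq_abs, one_mul, abs_mul, abs_of_pos hq]
      have h3 : ‖Complex.I * ((q * (s + t) : ℝ) : ℂ)‖ ≤ 1 := by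
        rw [h2]
        calc q * |s + t| ≤ q * (1 / q) :=
              mul_le_mul_of_nonneg_left (hsm.trans (min_le_right _ _)) hq.le
          _ = 1 := by field_simp
      have h4 := Complex.norm_exp_sub_one_le h3
      rw [h2] at h4
      calc ‖Complex.exp (Complex.I * ((q : ℂ) * (s + t))) - 1‖
          = ‖Complex.exp (Complex.I * ((q * (s + t) : ℝ) : ℂ)) - 1‖ := by
            norm_cast
        _ ≤ 2 * (q * |s + t|) := h4
    have hden : 2 / Real.pi * |s + t| ≤ ‖Complex.exp (Complex.I * ((s : ℂ) + t)) - 1‖ := by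
      have h := denom_lower (θ := s + t) (hsm.trans (min_le_left _ _))
      calc 2 / Real.pi * |s + t| ≤ ‖Complex.exp (Complex.I * ((s + t : ℝ) : ℂ)) - 1‖ := h
        _ = ‖Complex.exp (Complex.I * ((s : ℂ) + t)) - 1‖ := by norm_cast
    have hdpos : 0 < 2 / Real.pi * |s + t| := by positivity
    rw [phi, norm_div]
    calc ‖Complex.exp (Complex.I * (q * s)) - Complex.exp (-(Complex.I * (q * t)))‖ /
          ‖Complex.exp (Complex.I * ((s : ℂ) + t)) - 1‖
        ≤ (2 * (q * |s + t|)) / (2 / Real.pi * |s + t|) :=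
          div_le_div₀ (by positivity) hnum hdpos hden
      _ = q * Real.pi := by
          have habs : |s + t| ≠ 0 := abs_ne_zero.mpr hst0
          field_simp
  -- the compact set away from the singularity
  set K : Set ℝ := Set.Icc (-Real.pi) Real.pi ∩ {s : ℝ | δ ≤ |s + t|} with hK
  have hKcompact : IsCompact K := by
    apply isCompact_Icc.inter_right
    have : Continuous fun s : ℝ => |s + t| := by fun_prop
    exact isClosed_le continuous_const this
  by_cases hKne : K.Nonempty
  · set g : ℝ → ℝ := fun s => ‖Complex.exp (Complex.I * ((s : ℂ) + t)) - 1‖ with hg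
    have hgcont : Continuous g := by fun_prop
    obtain ⟨s₀, hs₀K, hmin'⟩ := hKcompact.exists_isMinOn hKne hgcont.continuousOn
    have hmin : ∀ s ∈ K, g s₀ ≤ g s := fun s hs => hmin' hs
    have hs₀ne : s₀ ≠ -t := by
      intro h
      have := hs₀K.2
      rw [Set.mem_setOf_eq, h] at this
      simp at this
      linarith
    have hc0 : 0 < g s₀ := by
      have hne := denom_ne_one ht1 ht2 hs₀K.1.1 hs₀K.1.2 hs₀ne
      have hne2 : Complex.exp (Complex.I * ((s₀ : ℂ) + t)) - 1 ≠ 0 := by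
        intro h0
        apply hne
        have h2 := sub_eq_zero.mp h0
        rw [← h2]
      simpa [hg] using norm_pos_iff.mpr hne2
    refine ⟨max (q * Real.pi) (2 / g s₀), fun s hs hsne => ?_⟩
    by_cases hsm : |s + t| ≤ δ
    · exact (small s hs hsne hsm).trans (le_max_left _ _)
    · have hsK : s ∈ K := ⟨hs, le_of_not_ge hsm⟩
      have h1 : ‖Complex.exp (Complex.I * (q * s)) - Complex.exp (-(Complex.I * (q * t)))‖ ≤ 2 := by
        calc ‖Complex.exp (Complex.I * (q * s)) - Complex.exp (-(Complex.I * (q * t)))‖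
            ≤ ‖Complex.exp (Complex.I * (q * s))‖ + ‖Complex.exp (-(Complex.I * (q * t)))‖ :=
              norm_sub_le _ _
          _ ≤ 2 := by
              have e1 : ‖Complex.exp (Complex.I * ((q : ℂ) * s))‖ = 1 := by
                rw [show Complex.I * ((q : ℂ) * s) = Complex.I * ((q * s : ℝ) : ℂ) by push_cast; ring]
                exact norm_exp_I_mul _
              have e2 : ‖Complex.exp (-(Complex.I * ((q : ℂ) * t)))‖ = 1 := by
                rw [show -(Complex.I * ((q : ℂ) * t)) = Complex.I * ((-(q * t) : ℝ) : ℂ) by push_cast; ring]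
                exact norm_exp_I_mul _
              rw [e1, e2]
              norm_num
      rw [phi, norm_div]
      have h2 := hmin s hsK
      calc ‖Complex.exp (Complex.I * (q * s)) - Complex.exp (-(Complex.I * (q * t)))‖ /
            ‖Complex.exp (Complex.I * ((s : ℂ) + t)) - 1‖
          ≤ 2 / g s₀ := div_le_div₀ (by norm_num) h1 hc0 h2
        _ ≤ max (q * Real.pi) (2 / g s₀) := le_max_right _ _
  · refine ⟨q * Real.pi, fun s hs hsne => ?_⟩
    by_cases hsm : |s + t| ≤ δ
    · exact small s hs hsne hsm
    · exact absurd ⟨s, hs, le_of_not_ge hsm⟩ hKne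

lemma phi_integrable (q t : ℝ) (hq : 0 < q) (ht1 : -Real.pi < t) (ht2 : t < Real.pi) :
    Integrable ((Set.Icc (-Real.pi) Real.pi).indicator (phi q t)) := by
  obtain ⟨C, hC⟩ := phi_bound q t hq ht1 ht2
  have hmeas : Measurable (phi q t) := by
    unfold phi
    fun_prop
  have hIO : IntegrableOn (phi q t) (Set.Icc (-Real.pi) Real.pi) := by
    apply Measure.integrableOn_of_bounded (M := max C 0)
    · exact measure_Icc_lt_top.ne
    · exact hmeas.aestronglyMeasurable
    · rw [ae_restrict_iff' measurableSet_Icc]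
      have hne : ∀ᵐ s : ℝ, s ≠ -t := by
        refine MeasureTheory.ae_iff.mpr ?_
        simp only [not_not]
        exact measure_singleton _
      filter_upwards [hne] with s hsne hmem
      exact (hC s hmem hsne).trans (le_max_left _ _)
  exact (integrable_indicator_iff measurableSet_Icc).mpr hIO

lemma ker_closed (t : ℝ) (M : ℕ) (s : ℝ)
    (hne : Complex.exp (Complex.I * ((s : ℂ) + t)) ≠ 1) :
    ker t M s = (Complex.exp (Complex.I * M * ((s : ℂ) + t))
        - Complex.exp (-(Complex.I * M * ((s : ℂ) + t)))) /
      (Complex.exp (Complex.I * ((s : ℂ) + t)) - 1) := by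
  set w : ℂ := Complex.exp (Complex.I * ((s : ℂ) + t)) with hw
  have hw0 : w ≠ 0 := Complex.exp_ne_zero _
  have hterm : ∀ n : ℤ, Complex.exp (Complex.I * n * ((s : ℂ) + t)) = w ^ n := by
    intro n
    rw [show Complex.I * (n : ℂ) * ((s : ℂ) + t) = (n : ℂ) * (Complex.I * ((s : ℂ) + t)) by ring,
      Complex.exp_int_mul]
  have h1 : Complex.exp (Complex.I * M * ((s : ℂ) + t)) = w ^ (M : ℤ) := by
    rw [← hterm (M : ℤ)]
    norm_num
  have h2 : Complex.exp (-(Complex.I * M * ((s : ℂ) + t))) = w ^ (-(M : ℤ)) := by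
    rw [← hterm (-(M : ℤ))]
    congr 1
    push_cast
    ring
  rw [h1, h2, ← zpow_sum_Icc w hw0 hne M, ker]
  exact Finset.sum_congr rfl fun n _ => hterm n

lemma pointwise_eq (q t : ℝ) (M : ℕ) (s : ℝ)
    (hne : Complex.exp (Complex.I * ((s : ℂ) + t)) ≠ 1) :
    (Complex.exp (Complex.I * (q * s)) - Complex.exp (-(Complex.I * (q * t)))) * ker t M s
      = phi q t s * (Complex.exp (Complex.I * M * ((s : ℂ) + t))
          - Complex.exp (-(Complex.I * M * ((s : ℂ) + t)))) := by
  rw [ker_closed t M s hne, phi, mul_div_assoc', div_mul_eq_mul_div]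

lemma ae_ne (a : ℝ) : ∀ᵐ s : ℝ, s ≠ a := by
  refine MeasureTheory.ae_iff.mpr ?_
  simp only [not_not]
  exact measure_singleton _

lemma main_tendsto (q t : ℝ) (hq : 0 < q) (hqi : ∀ n : ℤ, q ≠ (n : ℝ))
    (ht1 : -Real.pi < t) (ht2 : t < Real.pi) :
    Tendsto (fun M : ℕ => ∑ n ∈ Finset.Icc (-(M : ℤ)) ((M : ℤ) - 1),
        (-1 : ℂ) ^ n * Complex.exp (Complex.I * n * t) / ((n : ℂ) + q)) atTop
      (𝓝 ((Real.pi : ℂ) * Complex.exp (-(Complex.I * (q * t)))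
          / ((Real.sin (q * Real.pi) : ℝ) : ℂ))) := by
  have hpi := Real.pi_pos
  have hqn : ∀ n : ℤ, (q : ℝ) + n ≠ 0 := by
    intro n h
    exact hqi (-n) (by push_cast; linarith)
  have hsinR : Real.sin (q * Real.pi) ≠ 0 := by
    intro h
    obtain ⟨n, hn⟩ := Real.sin_eq_zero_iff.mp h
    refine hqi n ?_
    have := mul_right_cancel₀ (ne_of_gt hpi) hn
    linarith
  set ind : ℝ → ℂ := (Set.Icc (-Real.pi) Real.pi).indicator (phi q t) with hind
  have hint : Integrable ind := phi_integrable q t hq ht1 ht2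
  set G₁ : ℕ → ℂ := fun M => ∫ s : ℝ, ind s * Complex.exp (Complex.I * M * s) with hG₁
  set G₂ : ℕ → ℂ := fun M => ∫ s : ℝ, ind s * Complex.exp (-(Complex.I * M * s)) with hG₂
  have hR₁ : Tendsto G₁ atTop (𝓝 0) := rl_pos ind hint
  have hR₂ : Tendsto G₂ atTop (𝓝 0) := by
    have := rl_neg ind hint
    refine this.congr fun M => ?_
    refine integral_congr_ae (Eventually.of_forall fun s => ?_)
    congr 1
  have key : ∀ M : ℕ, 1 ≤ M →
      (2 * ((Real.sin (q * Real.pi) : ℝ) : ℂ)) * (∑ n ∈ Finset.Icc (-(M : ℤ)) ((M : ℤ) - 1),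
          (-1 : ℂ) ^ n * Complex.exp (Complex.I * n * t) / ((n : ℂ) + q))
        = 2 * (Real.pi : ℂ) * Complex.exp (-(Complex.I * (q * t)))
            + (Complex.exp (Complex.I * M * t) * G₁ M
                - Complex.exp (-(Complex.I * M * t)) * G₂ M) := by
    intro M hM
    rw [sum_rep q t hqn M]
    have hcont1 : Continuous fun s : ℝ =>
        (Complex.exp (Complex.I * (q * s)) - Complex.exp (-(Complex.I * (q * t)))) * ker t M s := by
      apply Continuous.mul ?_ (continuous_ker t M)
      fun_prop
    have hcont2 : Continuous fun s : ℝ => Complex.exp (-(Complex.I * (q * t))) * ker t M s :=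
      continuous_const.mul (continuous_ker t M)
    have hsplit : ∀ s ∈ Set.uIcc (-Real.pi) Real.pi,
        Complex.exp (Complex.I * (q * s)) * ker t M s
          = (Complex.exp (Complex.I * (q * s)) - Complex.exp (-(Complex.I * (q * t)))) * ker t M s
            + Complex.exp (-(Complex.I * (q * t))) * ker t M s := fun s _ => by ring
    rw [intervalIntegral.integral_congr hsplit,
      intervalIntegral.integral_add (hcont1.intervalIntegrable _ _) (hcont2.intervalIntegrable _ _),
      intervalIntegral.integral_const_mul, integral_ker t M hM]
    have e₁eq : ∀ s : ℝ, Complex.exp (Complex.I * M * ((s : ℂ) + t))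
        = Complex.exp (Complex.I * M * t) * Complex.exp (Complex.I * M * s) := fun s => by
      rw [← Complex.exp_add]; congr 1; ring
    have e₂eq : ∀ s : ℝ, Complex.exp (-(Complex.I * M * ((s : ℂ) + t)))
        = Complex.exp (-(Complex.I * M * t)) * Complex.exp (-(Complex.I * M * s)) := fun s => by
      rw [← Complex.exp_add]; congr 1; ring
    have h3 : (∫ s in (-Real.pi)..Real.pi,
        (Complex.exp (Complex.I * (q * s)) - Complex.exp (-(Complex.I * (q * t)))) * ker t M s)
        = Complex.exp (Complex.I * M * t) * G₁ M - Complex.exp (-(Complex.I * M * t)) * G₂ M := by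
      rw [intervalIntegral.integral_of_le (by linarith), ← integral_indicator measurableSet_Ioc]
      have hae : (Set.Ioc (-Real.pi) Real.pi).indicator
            (fun s => (Complex.exp (Complex.I * (q * s)) - Complex.exp (-(Complex.I * (q * t))))
              * ker t M s)
          =ᵐ[volume] fun s => ind s * (Complex.exp (Complex.I * M * ((s : ℂ) + t))
              - Complex.exp (-(Complex.I * M * ((s : ℂ) + t)))) := by
        filter_upwards [ae_ne (-t), ae_ne (-Real.pi)] with s hs1 hs2
        by_cases hmem : s ∈ Set.Ioc (-Real.pi) Real.pi
        · have hmem' : s ∈ Set.Icc (-Real.pi) Real.pi := Set.Ioc_subset_Icc_self hmem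
          rw [Set.indicator_of_mem hmem, hind, Set.indicator_of_mem hmem']
          exact pointwise_eq q t M s (denom_ne_one ht1 ht2 hmem'.1 hmem'.2 hs1)
        · have hmem' : s ∉ Set.Icc (-Real.pi) Real.pi := by
            intro hc
            apply hmem
            refine ⟨?_, hc.2⟩
            rcases hc.1.lt_or_eq with h' | h'
            · exact h'
            · exact absurd h'.symm hs2
          rw [Set.indicator_of_notMem hmem, hind, Set.indicator_of_notMem hmem', zero_mul]
      rw [integral_congr_ae hae]
      have hb1 : Integrable (fun s : ℝ =>
          Complex.exp (Complex.I * M * ((s : ℂ) + t)) * ind s) := by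
        refine hint.bdd_mul (c := 1) ?_ (Eventually.of_forall fun s => ?_)
        · apply Continuous.aestronglyMeasurable
          fun_prop
        · rw [e₁eq s, norm_mul,
            show Complex.I * (M : ℂ) * t = Complex.I * ((M * t : ℝ) : ℂ) by push_cast; ring,
            show Complex.I * (M : ℂ) * s = Complex.I * ((M * s : ℝ) : ℂ) by push_cast; ring,
            norm_exp_I_mul, norm_exp_I_mul]
          norm_num
      have hb2 : Integrable (fun s : ℝ =>
          Complex.exp (-(Complex.I * M * ((s : ℂ) + t))) * ind s) := by
        refine hint.bdd_mul (c := 1) ?_ (Eventually.of_forall fun s => ?_)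
        · apply Continuous.aestronglyMeasurable
          fun_prop
        · rw [show -(Complex.I * (M : ℂ) * ((s : ℂ) + t))
              = Complex.I * ((-(M * (s + t)) : ℝ) : ℂ) by push_cast; ring, norm_exp_I_mul]
      have hfun : (fun s : ℝ => ind s * (Complex.exp (Complex.I * M * ((s : ℂ) + t))
            - Complex.exp (-(Complex.I * M * ((s : ℂ) + t)))))
          = fun s : ℝ => Complex.exp (Complex.I * M * ((s : ℂ) + t)) * ind s
            - Complex.exp (-(Complex.I * M * ((s : ℂ) + t))) * ind s := by
        funext s; ring
      rw [hfun, integral_sub hb1 hb2]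
      have hfun1 : (fun s : ℝ => Complex.exp (Complex.I * M * ((s : ℂ) + t)) * ind s)
          = fun s : ℝ => Complex.exp (Complex.I * M * t)
              * (ind s * Complex.exp (Complex.I * M * s)) := by
        funext s; rw [e₁eq s]; ring
      have hfun2 : (fun s : ℝ => Complex.exp (-(Complex.I * M * ((s : ℂ) + t))) * ind s)
          = fun s : ℝ => Complex.exp (-(Complex.I * M * t))
              * (ind s * Complex.exp (-(Complex.I * M * s))) := by
        funext s; rw [e₂eq s]; ring
      rw [hfun1, hfun2, integral_const_mul, integral_const_mul, hG₁, hG₂]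
    rw [h3]
    ring
  have hz : Tendsto (fun M : ℕ => Complex.exp (Complex.I * M * t) * G₁ M
      - Complex.exp (-(Complex.I * M * t)) * G₂ M) atTop (𝓝 0) := by
    refine squeeze_zero_norm (a := fun M => ‖G₁ M‖ + ‖G₂ M‖) (fun M => ?_) ?_
    · 
      have n1 : ‖Complex.exp (Complex.I * M * t)‖ = 1 := by
        rw [show Complex.I * (M : ℂ) * t = Complex.I * ((M * t : ℝ) : ℂ) by push_cast; ring]
        exact norm_exp_I_mul _
      have n2 : ‖Complex.exp (-(Complex.I * M * t))‖ = 1 := by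
        rw [show -(Complex.I * (M : ℂ) * t) = Complex.I * ((-(M * t) : ℝ) : ℂ) by push_cast; ring]
        exact norm_exp_I_mul _
      calc ‖Complex.exp (Complex.I * M * t) * G₁ M - Complex.exp (-(Complex.I * M * t)) * G₂ M‖
          ≤ ‖Complex.exp (Complex.I * M * t) * G₁ M‖
            + ‖Complex.exp (-(Complex.I * M * t)) * G₂ M‖ := norm_sub_le _ _
        _ = ‖G₁ M‖ + ‖G₂ M‖ := by rw [norm_mul, norm_mul, n1, n2, one_mul, one_mul]
    · simpa using hR₁.norm.add hR₂.norm
  have hconst : Tendsto (fun _ : ℕ => 2 * (Real.pi : ℂ) * Complex.exp (-(Complex.I * (q * t))))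
      atTop (𝓝 (2 * (Real.pi : ℂ) * Complex.exp (-(Complex.I * (q * t))))) := tendsto_const_nhds
  have h2S : Tendsto (fun M : ℕ => (2 * ((Real.sin (q * Real.pi) : ℝ) : ℂ))
      * (∑ n ∈ Finset.Icc (-(M : ℤ)) ((M : ℤ) - 1),
          (-1 : ℂ) ^ n * Complex.exp (Complex.I * n * t) / ((n : ℂ) + q))) atTop
      (𝓝 (2 * (Real.pi : ℂ) * Complex.exp (-(Complex.I * (q * t))))) := by
    have hcomb := hconst.add hz
    rw [add_zero] at hcomb
    refine hcomb.congr' ?_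
    filter_upwards [eventually_ge_atTop 1] with M hM
    exact (key M hM).symm
  have h2sin0 : (2 * ((Real.sin (q * Real.pi) : ℝ) : ℂ)) ≠ 0 :=
    mul_ne_zero two_ne_zero (Complex.ofReal_ne_zero.mpr hsinR)
  have hS := h2S.const_mul ((2 * ((Real.sin (q * Real.pi) : ℝ) : ℂ))⁻¹)
  have hlim : ((2 * ((Real.sin (q * Real.pi) : ℝ) : ℂ))⁻¹
      * (2 * (Real.pi : ℂ) * Complex.exp (-(Complex.I * (q * t)))))
      = (Real.pi : ℂ) * Complex.exp (-(Complex.I * (q * t)))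
          / ((Real.sin (q * Real.pi) : ℝ) : ℂ) := by
    field_simp
  rw [hlim] at hS
  refine hS.congr fun M => ?_
  exact inv_mul_cancel_left₀ h2sin0 _

lemma A_conv (q x : ℝ) (hq : 0 < q) (hx : ∀ n : ℤ, x + Real.pi ≠ 2 * Real.pi * n) :
    ∃ L : ℂ, Tendsto (fun M : ℕ => ∑ N ∈ Finset.range M,
      (-1 : ℂ) ^ N * Complex.exp (Complex.I * (N : ℂ) * (x : ℂ)) / ((N : ℂ) + (q : ℂ)))
      atTop (𝓝 L) := by
  set z : ℂ := -Complex.exp (Complex.I * x) with hz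
  have hzn : ‖z‖ = 1 := by
    rw [hz, norm_neg, norm_exp_I_mul]
  have hzne : z ≠ 1 := by
    intro h
    have h1 : Complex.exp (Complex.I * ((x : ℂ) + Real.pi)) = 1 := by
      rw [mul_add, Complex.exp_add,
        show Complex.I * (Real.pi : ℂ) = (Real.pi : ℂ) * Complex.I by ring,
        Complex.exp_pi_mul_I]
      rw [hz] at h
      linear_combination h
    rw [Complex.exp_eq_one_iff] at h1
    obtain ⟨n, hn⟩ := h1
    have h2 : ((x + Real.pi : ℝ) : ℂ) * Complex.I = ((2 * Real.pi * n : ℝ) : ℂ) * Complex.I := by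
      push_cast
      rw [show ((x : ℂ) + Real.pi) * Complex.I = Complex.I * ((x : ℂ) + Real.pi) by ring, hn]
      ring
    exact hx n (by exact_mod_cast mul_right_cancel₀ Complex.I_ne_zero h2)
  have hz1 : z - 1 ≠ 0 := sub_ne_zero.mpr hzne
  have hterm : ∀ N : ℕ, (1 / ((N : ℝ) + q)) • z ^ N
      = (-1 : ℂ) ^ N * Complex.exp (Complex.I * (N : ℂ) * (x : ℂ)) / ((N : ℂ) + (q : ℂ)) := by
    intro N
    have hNq : ((N : ℝ) + q) ≠ 0 := by positivity
    have hzpow : z ^ N = (-1 : ℂ) ^ N * Complex.exp (Complex.I * (N : ℂ) * (x : ℂ)) := by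
      rw [hz, neg_pow, ← Complex.exp_nat_mul]
      congr 2
      ring
    rw [Complex.real_smul, hzpow]
    push_cast
    field_simp
  have hb : ∀ n : ℕ, ‖∑ i ∈ Finset.range n, z ^ i‖ ≤ 2 / ‖z - 1‖ := by
    intro n
    rw [geom_sum_eq hzne, norm_div]
    gcongr
    calc ‖z ^ n - 1‖ ≤ ‖z ^ n‖ + ‖(1 : ℂ)‖ := norm_sub_le _ _
      _ = 2 := by rw [norm_pow, hzn, one_pow, norm_one]; norm_num
  have hanti : Antitone fun N : ℕ => 1 / ((N : ℝ) + q) := by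
    intro a b hab
    have hb0 : (0 : ℝ) < (a : ℝ) + q := by positivity
    exact one_div_le_one_div_of_le hb0 (by have := (Nat.cast_le (α := ℝ)).mpr hab; linarith)
  have h0 : Tendsto (fun N : ℕ => 1 / ((N : ℝ) + q)) atTop (𝓝 0) := by
    simp only [one_div]
    apply Tendsto.inv_tendsto_atTop
    exact tendsto_atTop_add_const_right _ q tendsto_natCast_atTop_atTop
  have hcauchy := hanti.cauchySeq_series_mul_of_tendsto_zero_of_bounded h0 hb
  obtain ⟨L, hL⟩ := cauchySeq_tendsto_of_complete hcauchy
  exact ⟨L, hL.congr fun M => Finset.sum_congr rfl fun N _ => hterm N⟩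

lemma sum_split (q x : ℝ) (M : ℕ) :
    (∑ n ∈ Finset.Icc (-(M : ℤ)) ((M : ℤ) - 1),
        (-1 : ℂ) ^ n * Complex.exp (Complex.I * n * x) / ((n : ℂ) + q))
      = (∑ N ∈ Finset.range M,
          (-1 : ℂ) ^ N * Complex.exp (Complex.I * (N : ℂ) * (x : ℂ)) / ((N : ℂ) + (q : ℂ)))
        - (∑ N ∈ Finset.Icc 1 M,
            (-1 : ℂ) ^ N * Complex.exp (-Complex.I * (N : ℂ) * (x : ℂ)) / ((N : ℂ) - (q : ℂ))) := by
  set F : ℤ → ℂ := fun n => (-1 : ℂ) ^ n * Complex.exp (Complex.I * n * x) / ((n : ℂ) + q) with hF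
  have hunion : Finset.Icc (-(M : ℤ)) ((M : ℤ) - 1)
      = (Finset.Icc (-(M : ℤ)) (-1)) ∪ (Finset.Icc 0 ((M : ℤ) - 1)) := by
    ext n
    simp only [Finset.mem_Icc, Finset.mem_union]
    omega
  have hdisj : Disjoint (Finset.Icc (-(M : ℤ)) (-1)) (Finset.Icc (0 : ℤ) ((M : ℤ) - 1)) := by
    rw [Finset.disjoint_left]
    intro a ha hb
    simp only [Finset.mem_Icc] at ha hb
    omega
  rw [hunion, Finset.sum_union hdisj]
  have hpos : (∑ n ∈ Finset.Icc (0 : ℤ) ((M : ℤ) - 1), F n)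
      = ∑ N ∈ Finset.range M,
          (-1 : ℂ) ^ N * Complex.exp (Complex.I * (N : ℂ) * (x : ℂ)) / ((N : ℂ) + (q : ℂ)) := by
    refine Finset.sum_nbij' (fun n => n.toNat) (fun N => (N : ℤ)) ?_ ?_ ?_ ?_ ?_
    · intro a ha
      simp only [Finset.mem_Icc] at ha
      simp only [Finset.mem_range]
      omega
    · intro a ha
      simp only [Finset.mem_range] at ha
      simp only [Finset.mem_Icc]
      omega
    · intro a ha
      simp only [Finset.mem_Icc] at ha
      omega
    · intro a _
      simp
    · intro a ha
      simp only [Finset.mem_Icc] at ha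
      rw [hF]
      dsimp only
      have h1 : ((a.toNat : ℕ) : ℤ) = a := by omega
      rw [show ((a.toNat : ℕ) : ℂ) = ((a : ℤ) : ℂ) by exact_mod_cast congrArg Int.cast h1,
        show ((-1 : ℂ)) ^ (a.toNat) = (-1 : ℂ) ^ a by rw [← zpow_natCast, h1]]
  have hneg : (∑ n ∈ Finset.Icc (-(M : ℤ)) (-1), F n)
      = -∑ N ∈ Finset.Icc 1 M,
          (-1 : ℂ) ^ N * Complex.exp (-Complex.I * (N : ℂ) * (x : ℂ)) / ((N : ℂ) - (q : ℂ)) := by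
    rw [← Finset.sum_neg_distrib]
    refine Finset.sum_nbij' (fun n => (-n).toNat) (fun N => -(N : ℤ)) ?_ ?_ ?_ ?_ ?_
    · intro a ha
      simp only [Finset.mem_Icc] at ha
      simp only [Finset.mem_Icc]
      omega
    · intro a ha
      simp only [Finset.mem_Icc] at ha
      simp only [Finset.mem_Icc]
      omega
    · intro a ha
      simp only [Finset.mem_Icc] at ha
      omega
    · intro a ha
      simp only [Finset.mem_Icc] at ha
      omega
    · intro a ha
      simp only [Finset.mem_Icc] at ha
      rw [hF]
      dsimp only
      have h1 : (((-a).toNat : ℕ) : ℤ) = -a := by omega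
      have hc : (((-a).toNat : ℕ) : ℂ) = -((a : ℤ) : ℂ) := by exact_mod_cast congrArg Int.cast h1
      have hzp : ((-1 : ℂ)) ^ ((-a).toNat) = (-1 : ℂ) ^ a := by
        rw [← zpow_natCast, h1, neg_one_zpow_neg]
      rw [hc, hzp]
      have hexp : Complex.exp (Complex.I * a * x)
          = Complex.exp (-Complex.I * (-((a : ℤ) : ℂ)) * x) := by
        congr 1
        ring
      rw [hexp]
      have hden : (-((a : ℤ) : ℂ)) - (q : ℂ) = -(((a : ℤ) : ℂ) + q) := by ring
      rw [hden, div_neg, neg_neg]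
  rw [hpos, hneg]
  ring

end Stmt2

end


open Stmt2

/-- Equation (30): for non-integer `q > 0` and `(2m−1)π < x < (2m+1)π`,
`Σ_{N=1}^∞ (−1)^N e^{−iNx}/(N − q) = −π e^{iq(2mπ − x)}/sin(qπ) + Σ_{N=0}^∞ (−1)^N e^{iNx}/(N + q)`,
both series converging (in the sense of partial sums). -/
theorem statement2 (q : ℝ) (hq : 0 < q) (hqi : ∀ n : ℤ, q ≠ (n : ℝ))
    (m : ℤ) (x : ℝ) (hx1 : (2 * (m : ℝ) - 1) * Real.pi < x)
    (hx2 : x < (2 * (m : ℝ) + 1) * Real.pi) :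
    ∃ L : ℂ,
      Tendsto (fun M : ℕ => ∑ N ∈ Finset.range M,
          (-1 : ℂ) ^ N * Complex.exp (Complex.I * (N : ℂ) * (x : ℂ)) / ((N : ℂ) + (q : ℂ)))
        atTop (nhds L) ∧
      Tendsto (fun M : ℕ => ∑ N ∈ Finset.Icc 1 M,
          (-1 : ℂ) ^ N * Complex.exp (-Complex.I * (N : ℂ) * (x : ℂ)) / ((N : ℂ) - (q : ℂ)))
        atTop
        (nhds (-(Real.pi : ℂ) *
            Complex.exp (Complex.I * (q : ℂ) * ((2 * (m : ℝ) * Real.pi - x : ℝ) : ℂ)) /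
            Complex.sin ((q : ℂ) * (Real.pi : ℂ)) + L)) := by
  have hpi := Real.pi_pos
  have hx3 : ∀ n : ℤ, x + Real.pi ≠ 2 * Real.pi * n := by
    intro n h
    have h1 : 2 * (m : ℝ) * Real.pi < x + Real.pi := by linarith
    have h2 : x + Real.pi < 2 * ((m : ℝ) + 1) * Real.pi := by linarith
    rw [h] at h1 h2
    have hmn : (m : ℝ) < n := by nlinarith
    have hnm : (n : ℝ) < (m : ℝ) + 1 := by nlinarith
    have hmn' : m < n := by exact_mod_cast hmn
    have hnm2 : (n : ℝ) < ((m + 1 : ℤ) : ℝ) := by push_cast; linarith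
    have hnm' : n < m + 1 := by exact_mod_cast hnm2
    omega
  obtain ⟨L, hL⟩ := A_conv q x hq hx3
  refine ⟨L, hL, ?_⟩
  set t : ℝ := x - 2 * m * Real.pi with htdef
  have ht1 : -Real.pi < t := by rw [htdef]; nlinarith
  have ht2 : t < Real.pi := by rw [htdef]; nlinarith
  have hmain := main_tendsto q t hq hqi ht1 ht2
  have hterm_eq : ∀ n : ℤ, (-1 : ℂ) ^ n * Complex.exp (Complex.I * n * t) / ((n : ℂ) + q)
      = (-1 : ℂ) ^ n * Complex.exp (Complex.I * n * x) / ((n : ℂ) + q) := by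
    intro n
    have hxe : Complex.exp (Complex.I * n * x) = Complex.exp (Complex.I * n * t) := by
      rw [show Complex.I * n * (x : ℂ)
          = Complex.I * n * (t : ℂ) + ((n * m : ℤ) : ℂ) * (2 * Real.pi * Complex.I) by
        rw [htdef]; push_cast; ring]
      rw [Complex.exp_add, Complex.exp_int_mul_two_pi_mul_I, mul_one]
    rw [hxe]
  have hmainx : Tendsto (fun M : ℕ => ∑ n ∈ Finset.Icc (-(M : ℤ)) ((M : ℤ) - 1),
      (-1 : ℂ) ^ n * Complex.exp (Complex.I * n * x) / ((n : ℂ) + q)) atTop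
      (𝓝 ((Real.pi : ℂ) * Complex.exp (-(Complex.I * (q * t)))
        / ((Real.sin (q * Real.pi) : ℝ) : ℂ))) :=
    hmain.congr fun M => Finset.sum_congr rfl fun n _ => hterm_eq n
  have hB := hL.sub hmainx
  have hlimeq : -(Real.pi : ℂ) *
        Complex.exp (Complex.I * (q : ℂ) * ((2 * (m : ℝ) * Real.pi - x : ℝ) : ℂ)) /
        Complex.sin ((q : ℂ) * (Real.pi : ℂ)) + L
      = L - (Real.pi : ℂ) * Complex.exp (-(Complex.I * (q * t)))
          / ((Real.sin (q * Real.pi) : ℝ) : ℂ) := by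
    have hsin : ((Real.sin (q * Real.pi) : ℝ) : ℂ) = Complex.sin ((q : ℂ) * (Real.pi : ℂ)) := by
      rw [Complex.ofReal_sin]
      congr 1
      push_cast
      ring
    have hexp : Complex.exp (Complex.I * (q : ℂ) * ((2 * (m : ℝ) * Real.pi - x : ℝ) : ℂ))
        = Complex.exp (-(Complex.I * ((q : ℂ) * (t : ℂ)))) := by
      congr 1
      rw [htdef]
      push_cast
      ring
    rw [hsin, hexp]
    ring
  rw [hlimeq]
  refine hB.congr fun M => ?_
  rw [sum_split q x M]
  ring
end

section
/- For every real q, every integer N₂ with N₂ > q, and every real x with e^{ix} ≠ −1, the series Σ_{N=N₂}^{∞} (−1)^N e^{−iNx}/(N − q) converges and equals (−1)^{N₂}·e^{−iN₂x}·∫_0^∞ e^{−(N₂−q)y}/(1 + e^{−ix}·e^{−y}) dy. -/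
open Filter MeasureTheory
section helpersec
open Set
lemma myreal {b : ℝ} (hb : 0 < b) :
    ∫ y in Ioi (0:ℝ), Real.exp (-(b*y)) = 1/b := by
  have h := integral_comp_mul_left_Ioi (fun x => Real.exp (-x)) 0 hb
  simp only [mul_zero, integral_exp_neg_Ioi_zero, smul_eq_mul, mul_one] at h
  rw [h, one_div]

lemma mycexp {b : ℝ} (hb : 0 < b) :
    ∫ y in Ioi (0:ℝ), Complex.exp (-(b:ℂ)*(y:ℂ)) = 1/(b:ℂ) := by
  have h : ∀ y : ℝ, Complex.exp (-(b:ℂ)*(y:ℂ)) = Complex.ofRealCLM (Real.exp (-(b*y))) := by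
    intro y
    simp only [Complex.ofRealCLM_apply]
    rw [Complex.ofReal_exp]
    push_cast
    ring_nf
  simp_rw [h]
  rw [ContinuousLinearMap.integral_comp_comm _ ((exp_neg_integrableOn_Ioi 0 hb).congr
    (Filter.Eventually.of_forall fun y => by ring_nf)), myreal hb]
  simp [Complex.ofRealCLM_apply]

lemma mycexpInt {b : ℝ} (hb : 0 < b) :
    IntegrableOn (fun y : ℝ => Complex.exp (-(b:ℂ)*(y:ℂ))) (Ioi (0:ℝ)) := by
  have h : ∀ y : ℝ, Complex.exp (-(b:ℂ)*(y:ℂ)) = ((Real.exp (-(b*y)) : ℝ) : ℂ) := by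
    intro y
    rw [Complex.ofReal_exp]; push_cast; ring_nf
  have hri : IntegrableOn (fun y : ℝ => Real.exp (-(b*y))) (Ioi (0:ℝ)) :=
    (exp_neg_integrableOn_Ioi 0 hb).congr
      (Filter.Eventually.of_forall fun y => by ring_nf)
  exact (hri.ofReal (𝕜 := ℂ)).congr
    (Filter.Eventually.of_forall fun y => (h y).symm)

-- lower bound lemma
lemma lowbnd {z : ℂ} (hz1 : ‖z‖ = 1) (hzn : z ≠ -1) :
    ∃ c > 0, ∀ t : ℝ, t ∈ Icc (0:ℝ) 1 → c ≤ ‖1 + z * t‖ := by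
  have hcont : Continuous fun t : ℝ => ‖1 + z * t‖ := by
    exact continuous_norm.comp (by continuity)
  obtain ⟨t₀, ht₀, hmin⟩ := (isCompact_Icc (a := (0:ℝ)) (b := 1)).exists_isMinOn
    ⟨0, by norm_num⟩ hcont.continuousOn
  refine ⟨‖1 + z * t₀‖, ?_, fun t ht => hmin ht⟩
  rw [gt_iff_lt, norm_pos_iff]
  intro h0
  have h1 : z * t₀ = -1 := by linear_combination h0
  have h2 : ‖((t₀:ℂ))‖ = 1 := by
    have := congrArg norm h1
    rwa [norm_mul, hz1, one_mul, norm_neg, norm_one] at this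
  rw [Complex.norm_of_nonneg ht₀.1] at h2
  apply hzn
  rw [h2] at h1
  simpa using h1

end helpersec
open Set

/-- Equation (35): for `N₂ > q` and `e^{ix} ≠ −1`,
`Σ_{N=N₂}^∞ (−1)^N e^{−iNx}/(N − q) = (−1)^{N₂} e^{−iN₂x} ∫₀^∞ e^{−(N₂−q)y}/(1 + e^{−ix}e^{−y}) dy`. -/
theorem statement3 (q : ℝ) (N₂ : ℤ) (hN : q < (N₂ : ℝ)) (x : ℝ)
    (hx : Complex.exp (Complex.I * (x : ℂ)) ≠ -1) :
    Tendsto (fun M : ℕ => ∑ k ∈ Finset.range M,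
        (-1 : ℂ) ^ (N₂ + (k : ℤ)) *
          Complex.exp (-Complex.I * ((N₂ + (k : ℤ) : ℤ) : ℂ) * (x : ℂ)) /
          (((N₂ + (k : ℤ) : ℤ) : ℂ) - (q : ℂ)))
      atTop
      (nhds ((-1 : ℂ) ^ N₂ * Complex.exp (-Complex.I * (N₂ : ℂ) * (x : ℂ)) *
        ∫ y in Set.Ioi (0 : ℝ),
          Complex.exp (-((((N₂ : ℝ) - q) : ℝ) : ℂ) * (y : ℂ)) /
            (1 + Complex.exp (-Complex.I * (x : ℂ)) * Complex.exp (-(y : ℂ))))) := by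
  set z : ℂ := Complex.exp (-Complex.I * (x : ℂ)) with hzdef
  set a : ℝ := (N₂ : ℝ) - q with hadef
  have ha : 0 < a := by simp [hadef]; linarith
  have hz1 : ‖z‖ = 1 := by
    rw [hzdef, Complex.norm_exp]
    simp
  have hzn : z ≠ -1 := by
    intro h
    apply hx
    have h2 : Complex.exp (Complex.I * (x:ℂ)) * z = 1 := by
      rw [hzdef, ← Complex.exp_add]
      ring_nf
      exact Complex.exp_zero
    rw [h] at h2
    linear_combination -h2
  set w : ℝ → ℂ := fun y => z * Complex.exp (-(y:ℂ)) with hwdef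
  have hwval : ∀ y : ℝ, w y = z * ((Real.exp (-y) : ℝ) : ℂ) := by
    intro y
    rw [hwdef]
    simp [Complex.ofReal_exp]
  obtain ⟨c, hc, hcb⟩ := lowbnd hz1 hzn
  have hcw : ∀ y : ℝ, 0 ≤ y → c ≤ ‖1 + w y‖ := by
    intro y hy
    rw [hwval]
    exact hcb _ ⟨(Real.exp_pos _).le, by
      rw [← Real.exp_zero]; exact Real.exp_le_exp.mpr (by linarith)⟩
  have hne : ∀ y : ℝ, 0 ≤ y → 1 + w y ≠ 0 := by
    intro y hy h0
    have := hcw y hy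
    rw [h0] at this
    simp at this
    linarith
  -- norm of the complex exponential
  have hnexp : ∀ (b : ℝ) (y : ℝ), ‖Complex.exp (-(b:ℂ)*(y:ℂ))‖ = Real.exp (-(b*y)) := by
    intro b y
    rw [Complex.norm_exp]
    norm_num
  have hnw : ∀ y : ℝ, ‖w y‖ = Real.exp (-y) := by
    intro y
    rw [hwdef]
    simp only [norm_mul, hz1, one_mul, Complex.norm_exp]
    norm_num
  -- continuity / measurability
  have hwc : Continuous w := by
    rw [hwdef]
    exact continuous_const.mul (Complex.continuous_exp.comp (by continuity))
  have hmeas : ∀ M : ℕ, AEStronglyMeasurable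
      (fun y : ℝ => Complex.exp (-(a:ℂ)*(y:ℂ)) * (-(w y))^M / (1 + w y))
      (volume.restrict (Ioi (0:ℝ))) := by
    intro M
    refine ContinuousOn.aestronglyMeasurable ?_ measurableSet_Ioi
    refine ContinuousOn.div ?_ ?_ (fun y hy => hne y (le_of_lt hy))
    · exact ((Complex.continuous_exp.comp (by continuity)).mul ((hwc.neg).pow M)).continuousOn
    · exact (continuous_const.add hwc).continuousOn
  -- integrability of G M (with M = 0 giving F)
  have hGi : ∀ M : ℕ, IntegrableOn
      (fun y : ℝ => Complex.exp (-(a:ℂ)*(y:ℂ)) * (-(w y))^M / (1 + w y)) (Ioi (0:ℝ)) := by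
    intro M
    have hgi : IntegrableOn (fun y : ℝ => c⁻¹ * Real.exp (-(a*y))) (Ioi (0:ℝ)) := by
      have h0 : IntegrableOn (fun y : ℝ => Real.exp (-(a*y))) (Ioi (0:ℝ)) :=
        (exp_neg_integrableOn_Ioi 0 ha).congr
          (Filter.Eventually.of_forall fun y => by ring_nf)
      exact h0.const_mul c⁻¹
    refine Integrable.mono' hgi (hmeas M) ?_
    filter_upwards [ae_restrict_mem measurableSet_Ioi] with y hy
    rw [norm_div, norm_mul,
      hnexp, norm_pow, norm_neg, hnw]
    have h1 : Real.exp (-y) ^ M ≤ 1 := by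
      apply pow_le_one₀ (Real.exp_pos _).le
      rw [← Real.exp_zero]; exact Real.exp_le_exp.mpr (by simp at hy ⊢; linarith)
    have h2 : Real.exp (-(a*y)) * Real.exp (-y) ^ M ≤ Real.exp (-(a*y)) := by
      nth_rewrite 2 [← mul_one (Real.exp (-(a*y)))]
      exact mul_le_mul_of_nonneg_left h1 (Real.exp_pos _).le
    calc Real.exp (-(a*y)) * Real.exp (-y) ^ M / ‖1 + w y‖
        ≤ Real.exp (-(a*y)) / ‖1 + w y‖ := by
          apply div_le_div_of_nonneg_right h2 (norm_nonneg _) <;> try exact (norm_nonneg _)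
      _ ≤ Real.exp (-(a*y)) / c := by
          apply div_le_div_of_nonneg_left (Real.exp_pos _).le hc (hcw y (by simp at hy; linarith))
      _ = c⁻¹ * Real.exp (-(a*y)) := by rw [inv_mul_eq_div]
  -- per-k rewriting and integral
  have hek : ∀ (k : ℕ) (y : ℝ), Complex.exp (-(a:ℂ)*(y:ℂ)) * (-(w y))^k
      = (-z)^k * Complex.exp (-((a + k : ℝ):ℂ)*(y:ℂ)) := by
    intro k y
    have h1 : -(w y) = (-z) * Complex.exp (-(y:ℂ)) := by rw [hwdef]; ring
    rw [h1, mul_pow, ← Complex.exp_nat_mul, ← mul_assoc, mul_comm (Complex.exp (-(a:ℂ)*(y:ℂ)))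
      ((-z)^k), mul_assoc, ← Complex.exp_add]
    congr 2
    push_cast
    ring
  have hfki : ∀ k : ℕ, IntegrableOn
      (fun y : ℝ => Complex.exp (-(a:ℂ)*(y:ℂ)) * (-(w y))^k) (Ioi (0:ℝ)) := by
    intro k
    have hak : (0:ℝ) < a + k := by positivity
    exact ((mycexpInt hak).const_mul ((-z)^k)).congr
      (Filter.Eventually.of_forall fun y => (hek k y).symm)
  have hfk : ∀ k : ℕ, ∫ y in Ioi (0:ℝ), Complex.exp (-(a:ℂ)*(y:ℂ)) * (-(w y))^k
      = (-z)^k * (1/(((a:ℝ):ℂ) + k)) := by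
    intro k
    have hak : (0:ℝ) < a + k := by positivity
    simp_rw [hek]
    rw [integral_const_mul, mycexp hak]
    push_cast
    ring_nf
  -- the key identity
  have key : ∀ M : ℕ, ∑ k ∈ Finset.range M, (-z)^k * (1/(((a:ℝ):ℂ) + k))
      = (∫ y in Ioi (0:ℝ), Complex.exp (-(a:ℂ)*(y:ℂ)) / (1 + w y))
        - ∫ y in Ioi (0:ℝ), Complex.exp (-(a:ℂ)*(y:ℂ)) * (-(w y))^M / (1 + w y) := by
    intro M
    have h1 : ∑ k ∈ Finset.range M, (-z)^k * (1/(((a:ℝ):ℂ) + k))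
        = ∫ y in Ioi (0:ℝ), ∑ k ∈ Finset.range M,
            Complex.exp (-(a:ℂ)*(y:ℂ)) * (-(w y))^k := by
      rw [integral_finset_sum _ (fun k _ => hfki k)]
      exact Finset.sum_congr rfl fun k _ => (hfk k).symm
    rw [h1, ← integral_sub ((hGi 0).congr (Filter.Eventually.of_forall fun y => by simp)) (hGi M)]
    refine setIntegral_congr_fun measurableSet_Ioi fun y hy => ?_
    have h0 := hne y (le_of_lt hy)
    have hne1 : -(w y) ≠ 1 := by
      intro h
      apply h0
      rw [show w y = -(1:ℂ) by linear_combination -h]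
      ring
    rw [← Finset.mul_sum, geom_sum_eq hne1]
    have h0' : -w y - 1 ≠ 0 := by
      intro h
      apply h0
      linear_combination -h
    field_simp
    ring
  -- the partial sums equal C * (I - R M)
  set C : ℂ := (-1 : ℂ) ^ N₂ * Complex.exp (-Complex.I * (N₂ : ℂ) * (x : ℂ)) with hCdef
  have hterm : ∀ M : ℕ, ∑ k ∈ Finset.range M,
      (-1 : ℂ) ^ (N₂ + (k : ℤ)) *
        Complex.exp (-Complex.I * ((N₂ + (k : ℤ) : ℤ) : ℂ) * (x : ℂ)) /
        (((N₂ + (k : ℤ) : ℤ) : ℂ) - (q : ℂ))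
      = C * ∑ k ∈ Finset.range M, (-z)^k * (1/(((a:ℝ):ℂ) + k)) := by
    intro M
    rw [Finset.mul_sum]
    refine Finset.sum_congr rfl fun k _ => ?_
    have e1 : (-1 : ℂ) ^ (N₂ + (k : ℤ)) = (-1:ℂ)^N₂ * (-1:ℂ)^(k:ℕ) := by
      rw [zpow_add₀ (by norm_num : (-1:ℂ) ≠ 0), zpow_natCast]
    have e2 : Complex.exp (-Complex.I * ((N₂ + (k : ℤ) : ℤ) : ℂ) * (x : ℂ))
        = Complex.exp (-Complex.I * (N₂ : ℂ) * (x : ℂ)) * z^k := by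
      rw [hzdef, ← Complex.exp_nat_mul, ← Complex.exp_add]
      congr 1
      push_cast
      ring
    have e3 : (((N₂ + (k : ℤ) : ℤ) : ℂ) - (q : ℂ)) = ((a:ℝ):ℂ) + k := by
      rw [hadef]
      push_cast
      ring
    rw [e1, e2, e3, neg_pow]
    ring
  -- limits
  have hR0 : Tendsto (fun M : ℕ => ∫ y in Ioi (0:ℝ),
      Complex.exp (-(a:ℂ)*(y:ℂ)) * (-(w y))^M / (1 + w y)) atTop (nhds 0) := by
    have hb : ∀ M : ℕ, ‖∫ y in Ioi (0:ℝ),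
        Complex.exp (-(a:ℂ)*(y:ℂ)) * (-(w y))^M / (1 + w y)‖ ≤ c⁻¹ * (1/(a + M)) := by
      intro M
      have haM : (0:ℝ) < a + M := by positivity
      have hgint : IntegrableOn (fun y : ℝ => c⁻¹ * Real.exp (-((a+M)*y))) (Ioi (0:ℝ)) :=
        ((exp_neg_integrableOn_Ioi 0 haM).congr
          (Filter.Eventually.of_forall fun y => by ring_nf)).const_mul c⁻¹
      have hnormle : ∀ y ∈ Ioi (0:ℝ), ‖Complex.exp (-(a:ℂ)*(y:ℂ)) * (-(w y))^M / (1 + w y)‖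
          ≤ c⁻¹ * Real.exp (-((a+M)*y)) := by
        intro y hy
        rw [norm_div, norm_mul,
          hnexp, norm_pow, norm_neg, hnw]
        have hexpand : Real.exp (-((a+M)*y)) = Real.exp (-(a*y)) * Real.exp (-y) ^ M := by
          rw [← Real.exp_nat_mul, ← Real.exp_add]
          push_cast
          ring_nf
        rw [hexpand, inv_mul_eq_div]
        apply div_le_div_of_nonneg_left (by positivity) hc (hcw y (le_of_lt hy))
      calc ‖∫ y in Ioi (0:ℝ), Complex.exp (-(a:ℂ)*(y:ℂ)) * (-(w y))^M / (1 + w y)‖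
          ≤ ∫ y in Ioi (0:ℝ), c⁻¹ * Real.exp (-((a+M)*y)) := by
            refine norm_integral_le_of_norm_le hgint ?_
            filter_upwards [ae_restrict_mem measurableSet_Ioi] with y hy
            exact hnormle y hy
        _ = c⁻¹ * (1/(a+M)) := by rw [integral_const_mul, myreal haM]
    refine squeeze_zero_norm hb ?_
    have h1 : Tendsto (fun M : ℕ => a + (M:ℝ)) atTop atTop :=
      tendsto_atTop_add_const_left _ a tendsto_natCast_atTop_atTop
    have h2 : Tendsto (fun M : ℕ => 1/(a + (M:ℝ))) atTop (nhds 0) := by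
      simpa [one_div, Pi.inv_def] using h1.inv_tendsto_atTop
    simpa using h2.const_mul c⁻¹
  -- conclude
  have hF : Tendsto (fun M : ℕ => C * ((∫ y in Ioi (0:ℝ),
      Complex.exp (-(a:ℂ)*(y:ℂ)) / (1 + w y))
      - ∫ y in Ioi (0:ℝ), Complex.exp (-(a:ℂ)*(y:ℂ)) * (-(w y))^M / (1 + w y)))
      atTop (nhds (C * ((∫ y in Ioi (0:ℝ), Complex.exp (-(a:ℂ)*(y:ℂ)) / (1 + w y)) - 0))) :=
    (tendsto_const_nhds.sub hR0).const_mul C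
  rw [sub_zero] at hF
  refine hF.congr fun M => ?_
  rw [← key M, ← hterm M]
end

section
/- For every integer M ≥ 3: Σ_{p=2}^{M} 2^{2p−1}/((1 − 2^{−p})^{1/2}·(1 − 2^{−p−1})³) < 0.87·4^M. -/
lemma term_le (p : ℕ) (r s : ℝ) (hr : 0 < r) (hr2 : r ^ 2 ≤ 1 - ((2 : ℝ) ^ p)⁻¹)
    (hs : 0 < s) (hs1 : s ≤ 1 - ((2 : ℝ) ^ (p + 1))⁻¹) :
    (2 : ℝ) ^ (2 * p - 1) /
        (Real.sqrt (1 - ((2 : ℝ) ^ p)⁻¹) * (1 - ((2 : ℝ) ^ (p + 1))⁻¹) ^ 3)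
      ≤ (2 : ℝ) ^ (2 * p - 1) / (r * s ^ 3) := by
  have hrs : r ≤ Real.sqrt (1 - ((2 : ℝ) ^ p)⁻¹) :=
    (Real.le_sqrt' hr).mpr hr2
  have hss : s ^ 3 ≤ (1 - ((2 : ℝ) ^ (p + 1))⁻¹) ^ 3 :=
    pow_le_pow_left₀ hs.le hs1 3
  apply div_le_div_of_nonneg_left (by positivity) (by positivity)
  exact mul_le_mul hrs hss (by positivity) (Real.sqrt_nonneg _)

/-- Equation (43): for every `M ≥ 3`,
`Σ_{p=2}^{M} 2^{2p−1}/((1 − 2^{−p})^{1/2}·(1 − 2^{−p−1})³) < 0.87·4^M`. -/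
theorem statement5 (M : ℕ) (hM : 3 ≤ M) :
    ∑ p ∈ Finset.Icc 2 M,
        (2 : ℝ) ^ (2 * p - 1) /
          (Real.sqrt (1 - ((2 : ℝ) ^ p)⁻¹) * (1 - ((2 : ℝ) ^ (p + 1))⁻¹) ^ 3)
      < 0.87 * 4 ^ M := by
  induction M, hM using Nat.le_induction with
  | base =>
    have h2 := term_le 2 0.866 (7/8) (by norm_num) (by norm_num) (by norm_num) (by norm_num)
    have h3 := term_le 3 0.935 (15/16) (by norm_num) (by norm_num) (by norm_num) (by norm_num)
    rw [show Finset.Icc 2 3 = {2, 3} from rfl, Finset.sum_insert (by norm_num),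
      Finset.sum_singleton]
    have := add_le_add h2 h3
    refine lt_of_le_of_lt this ?_
    norm_num
  | succ M hM ih =>
    rw [Finset.sum_Icc_succ_top (by omega : 2 ≤ M + 1)]
    have hp : (16 : ℝ) ≤ 2 ^ (M + 1) := by
      calc (16 : ℝ) = 2 ^ 4 := by norm_num
      _ ≤ 2 ^ (M + 1) := by
        apply pow_le_pow_right₀ (by norm_num); omega
    have hp2 : (32 : ℝ) ≤ 2 ^ (M + 1 + 1) := by
      calc (32 : ℝ) = 2 ^ 5 := by norm_num
      _ ≤ 2 ^ (M + 1 + 1) := by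
        apply pow_le_pow_right₀ (by norm_num); omega
    have ht := term_le (M + 1) 0.968 (31/32) (by norm_num) ?_ (by norm_num) ?_
    · have hterm : (2 : ℝ) ^ (2 * (M + 1) - 1) = 2 * 4 ^ M := by
        have : 2 * (M + 1) - 1 = 2 * M + 1 := by omega
        rw [this, pow_succ, pow_mul]
        ring_nf
      rw [hterm] at ht ⊢
      have h4 : (0 : ℝ) < 4 ^ M := by positivity
      calc _ < 0.87 * 4 ^ M + 2 * 4 ^ M / (0.968 * (31/32) ^ 3) :=
            add_lt_add_of_lt_of_le ih ht
        _ ≤ 0.87 * 4 ^ (M + 1) := by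
            have key : 2 * (4:ℝ) ^ M / (0.968 * (31/32) ^ 3)
                = (8192000/3604711 : ℝ) * 4 ^ M := by ring
            rw [key, pow_succ]
            nlinarith
    · have : ((2 : ℝ) ^ (M + 1))⁻¹ ≤ 16⁻¹ := by
        apply inv_anti₀ (by norm_num) hp
      nlinarith
    · have : ((2 : ℝ) ^ (M + 1 + 1))⁻¹ ≤ 32⁻¹ := by
        apply inv_anti₀ (by norm_num) hp2
      nlinarith
end

section
/- For every real t > 0, the function α ↦ pc(α,t) is differentiable at every α > a(t), and its derivative pc′ satisfies (pc(α,t) − 1)·pc′(α,t) = pc(α,t)·√(2π·pc(α,t)/t). -/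
/-- `a(t) = √(8t/π)` -/
noncomputable def a (t : ℝ) : ℝ := Real.sqrt (8 * t / Real.pi)

/-- `pc(α,t) = 2(α/a(t))²·(1 + √(1 − (a(t)/α)²)) − 1` -/
noncomputable def pc (α t : ℝ) : ℝ :=
  2 * (α / a t) ^ 2 * (1 + Real.sqrt (1 - (a t / α) ^ 2)) - 1

/-- Equation (A70): for `t > 0`, `α ↦ pc(α,t)` is differentiable at every
`α > a(t)` and its derivative satisfies `(pc − 1)·pc′ = pc·√(2π·pc/t)`. -/
theorem statement10 (t : ℝ) (ht : 0 < t) (α : ℝ) (hα : a t < α) :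
    DifferentiableAt ℝ (fun β => pc β t) α ∧
    (pc α t - 1) * deriv (fun β => pc β t) α
      = pc α t * Real.sqrt (2 * Real.pi * pc α t / t) := by
  have hπ := Real.pi_pos
  have hA : 0 < a t := Real.sqrt_pos.mpr (by positivity)
  have hA2 : (a t) ^ 2 = 8 * t / Real.pi := Real.sq_sqrt (by positivity)
  set A := a t with hAdef
  have hα0 : 0 < α := lt_trans hA hα
  have hs2pos : 0 < α ^ 2 - A ^ 2 := by nlinarith
  set s := Real.sqrt (α ^ 2 - A ^ 2) with hsdef
  have hs : 0 < s := Real.sqrt_pos.mpr hs2pos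
  have hs2 : s ^ 2 = α ^ 2 - A ^ 2 := Real.sq_sqrt hs2pos.le
  -- local formula for pc
  have heq : ∀ β : ℝ, A < β →
      pc β t = (2 * β ^ 2 + 2 * β * Real.sqrt (β ^ 2 - A ^ 2) - A ^ 2) / A ^ 2 := by
    intro β hβ
    have hβ0 : 0 < β := lt_trans hA hβ
    have h1 : 1 - (A / β) ^ 2 = (β ^ 2 - A ^ 2) / β ^ 2 := by field_simp
    have h2 : Real.sqrt ((β ^ 2 - A ^ 2) / β ^ 2)
        = Real.sqrt (β ^ 2 - A ^ 2) / β := by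
      rw [Real.sqrt_div (by nlinarith), Real.sqrt_sq hβ0.le]
    rw [pc, ← hAdef, h1, h2]
    field_simp
  have hev : ∀ᶠ β in nhds α, pc β t
      = (2 * β ^ 2 + 2 * β * Real.sqrt (β ^ 2 - A ^ 2) - A ^ 2) / A ^ 2 := by
    filter_upwards [eventually_gt_nhds hα] with β hβ using heq β hβ
  -- derivative of the local formula
  have hg : HasDerivAt (fun β : ℝ => β ^ 2 - A ^ 2) (2 * α) α := by
    simpa using ((hasDerivAt_pow 2 α).sub_const (A ^ 2))
  have hsq : HasDerivAt (fun β : ℝ => Real.sqrt (β ^ 2 - A ^ 2))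
      (1 / (2 * s) * (2 * α)) α :=
    (Real.hasDerivAt_sqrt hs2pos.ne').comp α hg
  have hd : HasDerivAt
      (fun β : ℝ => (2 * β ^ 2 + 2 * β * Real.sqrt (β ^ 2 - A ^ 2) - A ^ 2) / A ^ 2)
      ((4 * α + 2 * s + 2 * α ^ 2 / s) / A ^ 2) α := by
    have h1 : HasDerivAt (fun β : ℝ => 2 * β ^ 2) (4 * α) α := by
      have h := (hasDerivAt_pow 2 α).const_mul 2
      refine h.congr_deriv ?_
      push_cast
      ring
    have h2 : HasDerivAt (fun β : ℝ => 2 * β * Real.sqrt (β ^ 2 - A ^ 2))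
        (2 * s + 2 * α ^ 2 / s) α := by
      have hb : HasDerivAt (fun β : ℝ => 2 * β) 2 α := by
        simpa using (hasDerivAt_id α).const_mul 2
      have := hb.mul hsq
      refine this.congr_deriv ?_
      field_simp
      ring
    have := ((h1.add h2).sub_const (A ^ 2)).div_const (A ^ 2)
    refine this.congr_deriv ?_
    field_simp
    ring
  have hd' : HasDerivAt (fun β => pc β t) ((4 * α + 2 * s + 2 * α ^ 2 / s) / A ^ 2) α :=
    hd.congr_of_eventuallyEq hev
  refine ⟨hd'.differentiableAt, ?_⟩
  rw [hd'.deriv]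
  have hpc : pc α t = ((α + s) / A) ^ 2 := by
    rw [heq α hα]
    field_simp
    nlinarith [hs2]
  have hkey : 2 * Real.pi * pc α t / t = (4 * (α + s) / A ^ 2) ^ 2 := by
    rw [hpc]
    have hApi : A ^ 2 * Real.pi = 8 * t := by
      rw [hA2]; field_simp
    field_simp
    linear_combination 2 * hApi
  rw [hkey, Real.sqrt_sq (by positivity), hpc]
  field_simp
  linear_combination (-(s * (α * 4 + s * 2) + α ^ 2 * 2)) * hs2
end

section
/- For every real s > 0, the series Σ_{k=0}^{∞} e^{iπk(k+1)/2}·e^{−(2k+1)s} converges absolutely and equals sinh(s)/cosh(2s); equivalently, Σ over odd positive integers α of (−1)^{(α−1)/2}·e^{−iπα/2}·e^{iπα²/8}·e^{−αs} = −i·e^{iπ/8}·sinh(s)/cosh(2s). -/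
open Complex

lemma exp_I_neg_pi_k (k : ℕ) : Complex.exp (Complex.I * (-(Real.pi * k):ℂ)) = (-1:ℂ)^k := by
  have : Complex.I * (-(Real.pi * k):ℂ) = -((k:ℂ) * ((Real.pi:ℂ) * I)) := by ring
  rw [this, Complex.exp_neg, Complex.exp_nat_mul, Complex.exp_pi_mul_I, ← inv_pow]
  norm_num

lemma eps_eq (k : ℕ) : Complex.exp (Complex.I * ((Real.pi * k * (k + 1) / 2 : ℝ) : ℂ)) =
    (1 + Complex.I)/2 * Complex.I ^ k + (1 - Complex.I)/2 * (-Complex.I) ^ k := by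
  induction k with
  | zero => norm_num; ring
  | succ k ih =>
    have h1 : Complex.I * ((Real.pi * (k+1) * ((k+1) + 1) / 2 : ℝ) : ℂ)
        = Complex.I * ((Real.pi * k * (k + 1) / 2 : ℝ) : ℂ) + ((k:ℂ)+1) * ((Real.pi:ℂ) * Complex.I) := by
      push_cast; ring
    have h2 : Complex.exp (((k:ℂ)+1) * ((Real.pi:ℂ) * Complex.I)) = (-1:ℂ)^(k+1) := by
      have h3 : ((k:ℂ)+1) = ((k+1:ℕ):ℂ) := by push_cast; ring
      rw [h3, Complex.exp_nat_mul, Complex.exp_pi_mul_I]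
    have h4 : (((k:ℕ)+1:ℕ):ℝ) = ((k:ℝ)+1) := by push_cast; ring
    rw [show ((Real.pi * ((k:ℕ)+1:ℕ) * (((k:ℕ)+1:ℕ) + 1) / 2 : ℝ) : ℂ)
        = ((Real.pi * (k+1) * ((k+1) + 1) / 2 : ℝ) : ℂ) from by rw [h4],
      h1, Complex.exp_add, ih, h2]
    rcases Nat.even_or_odd k with ⟨m, hm⟩ | ⟨m, hm⟩
    · subst hm
      have e1 : Complex.I ^ (m+m) = (-1:ℂ)^m := by
        rw [← two_mul, pow_mul, Complex.I_sq]
      have e2 : (-Complex.I) ^ (m+m) = (-1:ℂ)^m := by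
        rw [← two_mul, pow_mul, neg_pow, Complex.I_sq]; norm_num
      have p1 : Complex.I ^ (m+m+1) = (-1:ℂ)^m * Complex.I := by rw [pow_succ, e1]
      have p2 : (-Complex.I) ^ (m+m+1) = -((-1:ℂ)^m * Complex.I) := by
        rw [pow_succ, e2]; ring
      have p3 : (-1:ℂ)^(m+m+1) = -1 := by
        rw [pow_succ, Even.neg_one_pow ⟨m, rfl⟩]; ring
      rw [p3, p1, p2, e1, e2]
      linear_combination (-((-1:ℂ)^m)) * Complex.I_sq
    · subst hm
      have e1 : Complex.I ^ (2*m+1) = (-1:ℂ)^m * Complex.I := by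
        rw [pow_succ, pow_mul, Complex.I_sq]
      have e2 : (-Complex.I) ^ (2*m+1) = -((-1:ℂ)^m * Complex.I) := by
        rw [Odd.neg_pow ⟨m, rfl⟩, e1]
      have p1 : Complex.I ^ (2*m+1+1) = -((-1:ℂ)^m) := by
        rw [pow_succ, e1]; linear_combination ((-1:ℂ)^m) * Complex.I_sq
      have p2 : (-Complex.I) ^ (2*m+1+1) = -((-1:ℂ)^m) := by
        rw [pow_succ, e2]; linear_combination ((-1:ℂ)^m) * Complex.I_sq
      have p3 : (-1:ℂ)^(2*m+1+1) = 1 := Even.neg_one_pow ⟨m+1, by ring⟩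
      rw [p3, p1, p2, e1, e2]
      linear_combination ((-1:ℂ)^m) * Complex.I_sq

/-- Equation (C10): for `s > 0`, the absolutely convergent series
`Σ_{k=0}^∞ e^{iπk(k+1)/2} e^{−(2k+1)s} = sinh(s)/cosh(2s)`; equivalently, over
odd `α = 2k+1`,
`Σ (−1)^{(α−1)/2} e^{−iπα/2} e^{iπα²/8} e^{−αs} = −i e^{iπ/8} sinh(s)/cosh(2s)`. -/
theorem statement16 (s : ℝ) (hs : 0 < s) :
    Summable (fun k : ℕ =>
      ‖Complex.exp (Complex.I * ((Real.pi * k * (k + 1) / 2 : ℝ) : ℂ)) *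
        Complex.exp ((( -((2 * k + 1 : ℝ)) * s : ℝ)) : ℂ)‖) ∧
    HasSum (fun k : ℕ =>
        Complex.exp (Complex.I * ((Real.pi * k * (k + 1) / 2 : ℝ) : ℂ)) *
          Complex.exp ((( -((2 * k + 1 : ℝ)) * s : ℝ)) : ℂ))
      ((Real.sinh s / Real.cosh (2 * s) : ℝ) : ℂ) ∧
    HasSum (fun k : ℕ =>
        (-1 : ℂ) ^ k *
          Complex.exp (-Complex.I * ((Real.pi * (2 * k + 1) / 2 : ℝ) : ℂ)) *
          Complex.exp (Complex.I * ((Real.pi * (2 * k + 1 : ℝ) ^ 2 / 8 : ℝ) : ℂ)) *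
          Complex.exp ((( -((2 * k + 1 : ℝ)) * s : ℝ)) : ℂ))
      (-Complex.I * Complex.exp (Complex.I * ((Real.pi / 8 : ℝ) : ℂ)) *
        ((Real.sinh s / Real.cosh (2 * s) : ℝ) : ℂ)) := by
  set y : ℝ := Real.exp (-s) with hy
  have hy0 : 0 < y := Real.exp_pos _
  have hy1 : y < 1 := by rw [hy, Real.exp_lt_one_iff]; linarith
  have hEr : ∀ k : ℕ, Real.exp (-(2*(k:ℝ)+1)*s) = y * (y^2)^k := by
    intro k
    rw [show -(2*(k:ℝ)+1)*s = ((2*k+1:ℕ):ℝ)*(-s) by push_cast; ring, Real.exp_nat_mul, ← hy]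
    ring
  have hE : ∀ k : ℕ, (Complex.exp ((( -((2 * (k:ℝ) + 1 : ℝ)) * s : ℝ)) : ℂ)) = (y:ℂ) * (((y:ℂ))^2)^k := by
    intro k
    rw [← Complex.ofReal_exp, hEr k]; push_cast; ring
  -- Part 2 first
  have hfun : (fun k : ℕ =>
        Complex.exp (Complex.I * ((Real.pi * k * (k + 1) / 2 : ℝ) : ℂ)) *
          Complex.exp ((( -((2 * k + 1 : ℝ)) * s : ℝ)) : ℂ))
      = fun k : ℕ => (y:ℂ) * ((1 + Complex.I)/2 * (Complex.I * (y:ℂ)^2)^k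
          + (1 - Complex.I)/2 * (-(Complex.I * (y:ℂ)^2))^k) := by
    funext k
    rw [eps_eq, hE k]
    ring
  have hr : ‖Complex.I * (y:ℂ)^2‖ < 1 := by
    rw [norm_mul, Complex.norm_I, one_mul, norm_pow, Complex.norm_real,
      Real.norm_eq_abs, abs_of_pos hy0]
    nlinarith
  have hr2 : ‖-(Complex.I * (y:ℂ)^2)‖ < 1 := by rwa [norm_neg]
  have hg1 := hasSum_geometric_of_norm_lt_one hr
  have hg2 := hasSum_geometric_of_norm_lt_one hr2
  have hsum := ((hg1.mul_left ((1 + Complex.I)/2)).add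
    (hg2.mul_left ((1 - Complex.I)/2))).mul_left ((y:ℂ))
  have h2 : HasSum (fun k : ℕ =>
        Complex.exp (Complex.I * ((Real.pi * k * (k + 1) / 2 : ℝ) : ℂ)) *
          Complex.exp ((( -((2 * k + 1 : ℝ)) * s : ℝ)) : ℂ))
      ((Real.sinh s / Real.cosh (2 * s) : ℝ) : ℂ) := by
    rw [hfun]
    refine Eq.subst (motive := fun a => HasSum _ a) (?_ : ((Real.sinh s / Real.cosh (2 * s) : ℝ) : ℂ) = _).symm hsum
    have hprod : (1 - Complex.I * (y:ℂ)^2) * (1 - -(Complex.I * (y:ℂ)^2)) = 1 + (y:ℂ)^4 := by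
      linear_combination (-(y:ℂ)^4) * Complex.I_sq
    have hden : (1:ℂ) + (y:ℂ)^4 ≠ 0 := by
      have h0 : (0:ℝ) < 1 + y^4 := by positivity
      have h1 : ((1 + y^4:ℝ):ℂ) ≠ 0 := Complex.ofReal_ne_zero.mpr (ne_of_gt h0)
      push_cast at h1; exact h1
    have hne1 : (1 - Complex.I * (y:ℂ)^2) ≠ 0 := by
      intro h; exact hden (by rw [← hprod, h, zero_mul])
    have hne2 : (1 - -(Complex.I * (y:ℂ)^2)) ≠ 0 := by
      intro h; exact hden (by rw [← hprod, h, mul_zero])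
    have hre : Real.sinh s / Real.cosh (2*s) = y*(1-y^2)/(1+y^4) := by
      have h1 : Real.exp s = y⁻¹ := by rw [hy, Real.exp_neg, inv_inv]
      have h2 : Real.exp (2*s) = (y⁻¹)^2 := by rw [two_mul, Real.exp_add, h1]; ring
      have h3 : Real.exp (-(2*s)) = y^2 := by rw [Real.exp_neg, h2]; field_simp
      rw [Real.sinh_eq, Real.cosh_eq, h1, h2, h3, ← hy]
      field_simp
    have hne2' : (1 + Complex.I*(y:ℂ)^2) ≠ 0 := by rw [← sub_neg_eq_add]; exact hne2
    rw [hre]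
    push_cast
    simp only [sub_neg_eq_add]
    have hp : (1 + (y:ℂ)^4) = (1 - Complex.I * (y:ℂ)^2) * (1 + Complex.I * (y:ℂ)^2) := by
      linear_combination ((y:ℂ)^4) * Complex.I_sq
    have hX := mul_inv_cancel₀ hne1
    have hZ := mul_inv_cancel₀ hne2'
    rw [div_eq_iff hden, hp]
    linear_combination (-(y:ℂ)^3) * Complex.I_sq - (y:ℂ) * ((1 + Complex.I)/2) * (1 + Complex.I * (y:ℂ)^2) * hX - (y:ℂ) * ((1 - Complex.I)/2) * (1 - Complex.I * (y:ℂ)^2) * hZ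
  refine ⟨?_, h2, ?_⟩
  · -- summability of norms
    have hnorm : (fun k : ℕ =>
        ‖Complex.exp (Complex.I * ((Real.pi * k * (k + 1) / 2 : ℝ) : ℂ)) *
          Complex.exp ((( -((2 * k + 1 : ℝ)) * s : ℝ)) : ℂ)‖)
        = fun k : ℕ => y * (y^2)^k := by
      funext k
      rw [norm_mul, mul_comm Complex.I,
        Complex.norm_exp_ofReal_mul_I, one_mul, ← Complex.ofReal_exp, Complex.norm_real, Real.norm_eq_abs,
        abs_of_pos (Real.exp_pos _), hEr k]
    rw [hnorm]
    exact (summable_geometric_of_lt_one (by positivity) (by nlinarith)).mul_left y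
  · -- Part 3
    have hhalf : Complex.exp (Complex.I * ((-(Real.pi/2):ℝ):ℂ)) = -Complex.I := by
      push_cast
      rw [mul_comm, Complex.exp_mul_I]
      simp
    have hfun3 : (fun k : ℕ =>
        (-1 : ℂ) ^ k *
          Complex.exp (-Complex.I * ((Real.pi * (2 * k + 1) / 2 : ℝ) : ℂ)) *
          Complex.exp (Complex.I * ((Real.pi * (2 * k + 1 : ℝ) ^ 2 / 8 : ℝ) : ℂ)) *
          Complex.exp ((( -((2 * k + 1 : ℝ)) * s : ℝ)) : ℂ))
        = fun k : ℕ => (-Complex.I * Complex.exp (Complex.I * ((Real.pi / 8 : ℝ) : ℂ))) *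
            (Complex.exp (Complex.I * ((Real.pi * k * (k + 1) / 2 : ℝ) : ℂ)) *
              Complex.exp ((( -((2 * k + 1 : ℝ)) * s : ℝ)) : ℂ)) := by
      funext k
      have A : -Complex.I * ((Real.pi * (2 * (k:ℝ) + 1) / 2 : ℝ) : ℂ)
          = Complex.I * (-(Real.pi * k):ℂ) + Complex.I * ((-(Real.pi/2):ℝ):ℂ) := by
        push_cast; ring
      have B : Complex.I * ((Real.pi * (2 * (k:ℝ) + 1 : ℝ) ^ 2 / 8 : ℝ) : ℂ)
          = Complex.I * ((Real.pi * k * (k + 1) / 2 : ℝ) : ℂ)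
            + Complex.I * ((Real.pi / 8 : ℝ) : ℂ) := by
        push_cast; ring
      rw [A, B, Complex.exp_add, Complex.exp_add, exp_I_neg_pi_k, hhalf]
      have hkk : ((-1:ℂ)^k) * ((-1:ℂ)^k) = 1 := by
        rw [← pow_add]; exact Even.neg_one_pow ⟨k, rfl⟩
      rw [show (-1:ℂ)^k * ((-1:ℂ)^k * -Complex.I) = -Complex.I from by
        rw [← mul_assoc, hkk, one_mul]]
      ring
    rw [hfun3]
    exact h2.mul_left _
end

section
/- For all real t and real α, the absolutely convergent integrals satisfy ∫_0^1 e^{iπα²x/4}·exp(i(t/2)·log((1 − x)/x))·(x(1 − x))^{−1/4} dx = B + e^{iπα²/4}·conj(B), where B = ∫_1^∞ exp(iπα²/(4(w + 1)) + i(t/2)·log w)·w^{−1/4}·(w + 1)^{−3/2} dw and conj denotes complex conjugation. -/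
open MeasureTheory Set

noncomputable def Fi18 (t α x : ℝ) : ℂ :=
  Complex.exp (Complex.I * ((Real.pi * α ^ 2 * x / 4 : ℝ) : ℂ)) *
    Complex.exp (Complex.I * ((t / 2 * Real.log ((1 - x) / x) : ℝ) : ℂ)) *
    (((x * (1 - x)) ^ (-(1 : ℝ) / 4) : ℝ) : ℂ)

noncomputable def Gi18 (t α w : ℝ) : ℂ :=
  Complex.exp (Complex.I * ((Real.pi * α ^ 2 / (4 * (w + 1)) + t / 2 * Real.log w : ℝ) : ℂ)) *
    (((w ^ (-(1 : ℝ) / 4) * (w + 1) ^ (-(3 : ℝ) / 2) : ℝ)) : ℂ)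

lemma contGi18 (t α : ℝ) : ContinuousOn (Gi18 t α) (Set.Ioi 1) := by
  have hne : ∀ w ∈ Set.Ioi (1:ℝ), w ≠ 0 := fun w hw => by
    simp only [Set.mem_Ioi] at hw; linarith
  have hne1 : ∀ w ∈ Set.Ioi (1:ℝ), w + 1 ≠ 0 := fun w hw => by
    simp only [Set.mem_Ioi] at hw; linarith
  have c1 : ContinuousOn (fun w : ℝ => Real.pi * α ^ 2 / (4 * (w + 1)) + t / 2 * Real.log w)
      (Set.Ioi 1) := by
    refine ContinuousOn.add (continuousOn_const.div (by fun_prop) ?_) ?_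
    · intro w hw; have := hne1 w hw; positivity
    · exact continuousOn_const.mul (Real.continuousOn_log.mono fun w hw => hne w hw)
  have c2 : ContinuousOn (fun w : ℝ => w ^ (-(1:ℝ)/4) * (w + 1) ^ (-(3:ℝ)/2)) (Set.Ioi 1) := by
    refine ContinuousOn.mul (continuousOn_id.rpow_const fun w hw => Or.inl (hne w hw)) ?_
    exact (continuousOn_id.add continuousOn_const).rpow_const fun w hw => Or.inl (hne1 w hw)
  exact (Complex.continuous_exp.comp_continuousOn
    (continuousOn_const.mul (Complex.continuous_ofReal.comp_continuousOn c1))).mul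
    (Complex.continuous_ofReal.comp_continuousOn c2)

lemma normExp18 (r : ℝ) : ‖Complex.exp (Complex.I * (r : ℂ))‖ = 1 := by
  rw [Complex.norm_exp]
  simp

lemma intGi18 (t α : ℝ) : IntegrableOn (Gi18 t α) (Set.Ioi 1) := by
  refine Integrable.mono' (g := fun w => w ^ (-(7:ℝ)/4))
    (integrableOn_Ioi_rpow_of_lt (by norm_num) one_pos)
    ((contGi18 t α).aestronglyMeasurable measurableSet_Ioi) ?_
  filter_upwards [ae_restrict_mem measurableSet_Ioi] with w hw
  simp only [Set.mem_Ioi] at hw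
  have hw0 : (0:ℝ) < w := by linarith
  have h1 : (0:ℝ) < w + 1 := by linarith
  rw [Gi18, norm_mul, normExp18, one_mul, Complex.norm_real, Real.norm_eq_abs,
    abs_of_nonneg (by positivity)]
  calc w ^ (-(1:ℝ)/4) * (w+1) ^ (-(3:ℝ)/2)
      ≤ w ^ (-(1:ℝ)/4) * w ^ (-(3:ℝ)/2) := by
        refine mul_le_mul_of_nonneg_left
          (Real.rpow_le_rpow_of_nonpos hw0 (by linarith) (by norm_num)) (by positivity)
    _ = w ^ (-(7:ℝ)/4) := by rw [← Real.rpow_add hw0]; norm_num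


lemma rpow18 {w : ℝ} (hw : 1 < w) :
    ((w + 1) ^ 2)⁻¹ * ((w + 1)⁻¹ * (1 - (w + 1)⁻¹)) ^ (-(1 : ℝ) / 4)
      = w ^ (-(1 : ℝ) / 4) * (w + 1) ^ (-(3 : ℝ) / 2) := by
  have hw0 : (0:ℝ) < w := by linarith
  have h1 : (0:ℝ) < w + 1 := by linarith
  have hx1 : (w + 1)⁻¹ * (1 - (w + 1)⁻¹) = w * ((w+1)^2)⁻¹ := by
    field_simp; ring_nf
  rw [hx1]
  have h2 : ((w+1)^2)⁻¹ = (w+1) ^ (-(2:ℝ)) := by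
    rw [Real.rpow_neg h1.le, Real.rpow_two]
  rw [h2, Real.mul_rpow hw0.le (Real.rpow_nonneg h1.le _), ← Real.rpow_mul h1.le,
    show ((-2:ℝ))*(-(1:ℝ)/4) = 1/2 by norm_num,
    show (-(3:ℝ)/2) = -2 + 1/2 by norm_num, Real.rpow_add h1]
  ring

lemma key1 (t α : ℝ) {w : ℝ} (hw : 1 < w) :
    |(-(((w + 1) ^ 2)⁻¹) : ℝ)| • Fi18 t α ((w + 1)⁻¹) = Gi18 t α w := by
  have hw0 : (0:ℝ) < w := by linarith
  have h1 : (0:ℝ) < w + 1 := by linarith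
  have habs : |(-(((w + 1) ^ 2)⁻¹) : ℝ)| = ((w + 1) ^ 2)⁻¹ := by
    rw [abs_neg, abs_of_pos]; positivity
  have hq : (1 - (w + 1)⁻¹) / (w + 1)⁻¹ = w := by
    field_simp; ring
  have hph : Real.pi * α ^ 2 * (w + 1)⁻¹ / 4 = Real.pi * α ^ 2 / (4 * (w + 1)) := by
    field_simp
  rw [habs, Fi18, Gi18, hq, hph, Complex.real_smul, ← rpow18 hw,
    Complex.ofReal_add, mul_add Complex.I, Complex.exp_add, Complex.ofReal_mul]
  push_cast
  ring

lemma mulhelp18 {e1 e2 e3 e4 q1 q2 q3 : ℂ} (hE : e1 * e2 = e3 * e4) (hC : q1 * q2 = q3) :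
    q1 * (e1 * e2 * q2) = e3 * (e4 * q3) := by
  linear_combination q1 * q2 * hE + e3 * e4 * hC

lemma key2 (t α : ℝ) {w : ℝ} (hw : 1 < w) :
    |(((w + 1) ^ 2)⁻¹ : ℝ)| • Fi18 t α (1 - (w + 1)⁻¹) =
      Complex.exp (Complex.I * ((Real.pi * α ^ 2 / 4 : ℝ) : ℂ)) * (starRingEnd ℂ) (Gi18 t α w) := by
  have hw0 : (0:ℝ) < w := by linarith
  have h1 : (0:ℝ) < w + 1 := by linarith
  have habs : |(((w + 1) ^ 2)⁻¹ : ℝ)| = ((w + 1) ^ 2)⁻¹ := abs_of_pos (by positivity)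
  have hx : 1 - (1 - (w + 1)⁻¹) = (w + 1)⁻¹ := by ring
  have hq : (1 - (1 - (w + 1)⁻¹)) / (1 - (w + 1)⁻¹) = w⁻¹ := by
    rw [hx]; rw [show (1 : ℝ) - (w+1)⁻¹ = w * (w+1)⁻¹ by field_simp; ring]
    field_simp
  have hlog : Real.log ((1 - (1 - (w + 1)⁻¹)) / (1 - (w + 1)⁻¹)) = -Real.log w := by
    rw [hq, Real.log_inv]
  have hph : Real.pi * α ^ 2 * (1 - (w + 1)⁻¹) / 4
      = Real.pi * α ^ 2 / 4 - Real.pi * α ^ 2 / (4 * (w + 1)) := by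
    field_simp
  have hprod : ((w + 1) ^ 2)⁻¹ * ((1 - (w + 1)⁻¹) * (1 - (1 - (w + 1)⁻¹))) ^ (-(1:ℝ)/4)
      = w ^ (-(1:ℝ)/4) * (w + 1) ^ (-(3:ℝ)/2) := by
    rw [hx, mul_comm (1 - (w+1)⁻¹)]; exact rpow18 hw
  rw [habs, Fi18, Gi18, hlog, hph, Complex.real_smul, map_mul, ← Complex.exp_conj,
    map_mul, Complex.conj_I, Complex.conj_ofReal, Complex.conj_ofReal]
  refine mulhelp18 ?_ ?_
  · rw [← Complex.exp_add, ← Complex.exp_add]; congr 1; push_cast; ring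
  · rw [← Complex.ofReal_mul, hprod]

lemma img118 : (fun w : ℝ => (w + 1)⁻¹) '' Ioi 1 = Ioo 0 (1/2) := by
  ext y
  simp only [Set.mem_image, Set.mem_Ioi, Set.mem_Ioo]
  constructor
  · rintro ⟨w, hw, rfl⟩
    have h1 : (0:ℝ) < w + 1 := by linarith
    refine ⟨by positivity, ?_⟩
    rw [show (1:ℝ)/2 = 2⁻¹ by norm_num]
    exact inv_strictAnti₀ two_pos (by linarith)
  · rintro ⟨hy0, hy2⟩
    have h2 : (2:ℝ) < y⁻¹ := by
      rw [← one_div, lt_div_iff₀ hy0]; linarith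
    exact ⟨y⁻¹ - 1, by linarith, by rw [sub_add_cancel, inv_inv]⟩

lemma img218 : (fun w : ℝ => 1 - (w + 1)⁻¹) '' Ioi 1 = Ioo (1/2) 1 := by
  ext y
  simp only [Set.mem_image, Set.mem_Ioi, Set.mem_Ioo]
  constructor
  · rintro ⟨w, hw, rfl⟩
    have h1 : (0:ℝ) < w + 1 := by linarith
    have hlt : (w + 1)⁻¹ < 2⁻¹ := inv_strictAnti₀ two_pos (by linarith)
    have hpos : (0:ℝ) < (w + 1)⁻¹ := by positivity
    constructor <;> [norm_num at hlt ⊢; skip] <;> linarith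
  · rintro ⟨hy1, hy2⟩
    have hz0 : (0:ℝ) < 1 - y := by linarith
    have h2 : (2:ℝ) < (1 - y)⁻¹ := by
      rw [← one_div, lt_div_iff₀ hz0]; linarith
    refine ⟨(1 - y)⁻¹ - 1, by linarith, ?_⟩
    rw [sub_add_cancel, inv_inv]; ring

lemma deriv118 {w : ℝ} (hw : w ∈ Set.Ioi (1:ℝ)) :
    HasDerivWithinAt (fun w : ℝ => (w + 1)⁻¹) (-(((w + 1) ^ 2)⁻¹)) (Set.Ioi 1) w := by
  have h1 : w + 1 ≠ 0 := by simp only [Set.mem_Ioi] at hw; positivity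
  have h := ((hasDerivAt_id w).add_const 1).inv h1
  simp only [id] at h
  exact h.hasDerivWithinAt.congr_deriv (by ring)

lemma deriv218 {w : ℝ} (hw : w ∈ Set.Ioi (1:ℝ)) :
    HasDerivWithinAt (fun w : ℝ => 1 - (w + 1)⁻¹) (((w + 1) ^ 2)⁻¹) (Set.Ioi 1) w := by
  have h1 : w + 1 ≠ 0 := by simp only [Set.mem_Ioi] at hw; positivity
  have h := (((hasDerivAt_id w).add_const 1).inv h1).const_sub 1
  simp only [id] at h
  exact h.hasDerivWithinAt.congr_deriv (by ring)

lemma inj118 : Set.InjOn (fun w : ℝ => (w + 1)⁻¹) (Set.Ioi 1) := by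
  intro a _ b _ h
  have : a + 1 = b + 1 := inv_injective h
  linarith

lemma inj218 : Set.InjOn (fun w : ℝ => 1 - (w + 1)⁻¹) (Set.Ioi 1) := by
  intro a _ b _ h
  simp only at h
  have : (a + 1)⁻¹ = (b + 1)⁻¹ := by linarith
  have : a + 1 = b + 1 := inv_injective this
  linarith

lemma intGiConj18 (t α : ℝ) :
    IntegrableOn (fun w => (starRingEnd ℂ) (Gi18 t α w)) (Set.Ioi 1) := by
  have h := intGi18 t α
  refine ⟨continuous_star.comp_aestronglyMeasurable h.aestronglyMeasurable, ?_⟩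
  simpa [HasFiniteIntegral, RCLike.norm_conj] using h.hasFiniteIntegral

/-- Equations (A43)–(A44): Euler's integral over `(0,1)` equals `B + e^{iπα²/4}·conj(B)`,
where `B` is the integral over `(1,∞)`. -/
theorem statement18 (t α : ℝ) :
    IntegrableOn (fun x : ℝ =>
        Complex.exp (Complex.I * ((Real.pi * α ^ 2 * x / 4 : ℝ) : ℂ)) *
          Complex.exp (Complex.I * ((t / 2 * Real.log ((1 - x) / x) : ℝ) : ℂ)) *
          (((x * (1 - x)) ^ (-(1 : ℝ) / 4) : ℝ) : ℂ)) (Set.Ioo 0 1) ∧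
    IntegrableOn (fun w : ℝ =>
        Complex.exp (Complex.I * ((Real.pi * α ^ 2 / (4 * (w + 1)) + t / 2 * Real.log w : ℝ) : ℂ)) *
          (((w ^ (-(1 : ℝ) / 4) * (w + 1) ^ (-(3 : ℝ) / 2) : ℝ)) : ℂ)) (Set.Ioi 1) ∧
    (∫ x in Set.Ioo (0 : ℝ) 1,
        Complex.exp (Complex.I * ((Real.pi * α ^ 2 * x / 4 : ℝ) : ℂ)) *
          Complex.exp (Complex.I * ((t / 2 * Real.log ((1 - x) / x) : ℝ) : ℂ)) *
          (((x * (1 - x)) ^ (-(1 : ℝ) / 4) : ℝ) : ℂ))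
      = (∫ w in Set.Ioi (1 : ℝ),
          Complex.exp (Complex.I * ((Real.pi * α ^ 2 / (4 * (w + 1)) + t / 2 * Real.log w : ℝ) : ℂ)) *
            (((w ^ (-(1 : ℝ) / 4) * (w + 1) ^ (-(3 : ℝ) / 2) : ℝ)) : ℂ)) +
        Complex.exp (Complex.I * ((Real.pi * α ^ 2 / 4 : ℝ) : ℂ)) *
          (starRingEnd ℂ) (∫ w in Set.Ioi (1 : ℝ),
            Complex.exp (Complex.I * ((Real.pi * α ^ 2 / (4 * (w + 1)) + t / 2 * Real.log w : ℝ) : ℂ)) *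
              (((w ^ (-(1 : ℝ) / 4) * (w + 1) ^ (-(3 : ℝ) / 2) : ℝ)) : ℂ)) := by
  have eF : (fun x : ℝ =>
      Complex.exp (Complex.I * ((Real.pi * α ^ 2 * x / 4 : ℝ) : ℂ)) *
        Complex.exp (Complex.I * ((t / 2 * Real.log ((1 - x) / x) : ℝ) : ℂ)) *
        (((x * (1 - x)) ^ (-(1 : ℝ) / 4) : ℝ) : ℂ)) = Fi18 t α := rfl
  have eG : (fun w : ℝ =>
      Complex.exp (Complex.I * ((Real.pi * α ^ 2 / (4 * (w + 1)) + t / 2 * Real.log w : ℝ) : ℂ)) *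
        (((w ^ (-(1 : ℝ) / 4) * (w + 1) ^ (-(3 : ℝ) / 2) : ℝ)) : ℂ)) = Gi18 t α := rfl
  rw [eF, eG]
  have hIm : MeasurableSet (Set.Ioi (1:ℝ)) := measurableSet_Ioi
  have hGint := intGi18 t α
  have hd1 : ∀ w ∈ Set.Ioi (1:ℝ),
      HasDerivWithinAt (fun w : ℝ => (w + 1)⁻¹) (-(((w + 1) ^ 2)⁻¹)) (Set.Ioi 1) w :=
    fun w hw => deriv118 hw
  have hd2 : ∀ w ∈ Set.Ioi (1:ℝ),
      HasDerivWithinAt (fun w : ℝ => 1 - (w + 1)⁻¹) (((w + 1) ^ 2)⁻¹) (Set.Ioi 1) w :=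
    fun w hw => deriv218 hw
  have hF1 : IntegrableOn (Fi18 t α) (Set.Ioo 0 (1/2)) := by
    rw [← img118]
    refine (integrableOn_image_iff_integrableOn_abs_deriv_smul hIm hd1 inj118 _).2 ?_
    exact hGint.congr_fun (fun w hw => (key1 t α hw).symm) hIm
  have hF2 : IntegrableOn (Fi18 t α) (Set.Ioo (1/2) 1) := by
    rw [← img218]
    refine (integrableOn_image_iff_integrableOn_abs_deriv_smul hIm hd2 inj218 _).2 ?_
    refine IntegrableOn.congr_fun ?_ (fun w hw => (key2 t α hw).symm) hIm
    exact (intGiConj18 t α).const_mul _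
  have hu : Set.Ioo (0:ℝ) (1/2) ∪ Set.Ico (1/2) 1 = Set.Ioo 0 1 :=
    Set.Ioo_union_Ico_eq_Ioo (by norm_num) (by norm_num)
  have hF2' : IntegrableOn (Fi18 t α) (Set.Ico (1/2) 1) :=
    (integrableOn_Ico_iff_integrableOn_Ioo).2 hF2
  have hF : IntegrableOn (Fi18 t α) (Set.Ioo 0 1) := by
    rw [← hu]; exact hF1.union hF2'
  refine ⟨hF, hGint, ?_⟩
  have hdisj : Disjoint (Set.Ioo (0:ℝ) (1/2)) (Set.Ico (1/2) 1) := by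
    rw [Set.disjoint_left]
    rintro x ⟨_, h2⟩ ⟨h3, _⟩
    linarith
  have hsplit : ∫ x in Set.Ioo (0:ℝ) 1, Fi18 t α x
      = (∫ x in Set.Ioo (0:ℝ) (1/2), Fi18 t α x) + ∫ x in Set.Ioo (1/2:ℝ) 1, Fi18 t α x := by
    rw [← hu, setIntegral_union hdisj measurableSet_Ico hF1 hF2', integral_Ico_eq_integral_Ioo]
  have h1 : ∫ x in Set.Ioo (0:ℝ) (1/2), Fi18 t α x = ∫ w in Set.Ioi 1, Gi18 t α w := by
    rw [← img118, integral_image_eq_integral_abs_deriv_smul hIm hd1 inj118]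
    exact setIntegral_congr_fun hIm fun w hw => key1 t α hw
  have h2 : ∫ x in Set.Ioo (1/2:ℝ) 1, Fi18 t α x
      = Complex.exp (Complex.I * ((Real.pi * α ^ 2 / 4 : ℝ) : ℂ)) *
          (starRingEnd ℂ) (∫ w in Set.Ioi 1, Gi18 t α w) := by
    rw [← img218, integral_image_eq_integral_abs_deriv_smul hIm hd2 inj218,
      setIntegral_congr_fun hIm fun w hw => key2 t α hw, integral_const_mul, integral_conj]
  rw [hsplit, h1, h2]
end
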